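/- arXiv:1511.02906 — 7 statements merged into one kernel-verified Lean document; each statement's English description precedes it below -/
import Mathlib

section
/- Let R be a commutative ring and I an ideal of R satisfying SR₁(I). Then every matrix A ∈ SL(2,R) with A ≡ 1₂ (mod I) can be written as A = (1₂ + aE₁₂) · diag(ε, ε⁻¹) · (1₂ + bE₂₁) · (1₂ + cE₁₂), where a, b, c ∈ I and ε is a unit of R with ε ≡ 1 (mod I). (Relative Gauss decomposition for SL₂; base case of Theorem 1.) -/
open Matrix

/-- A row `a` is `I`-unimodular if its first entry is congruent to `1` mod `I`,
its remaining entries lie in `I`, and its entries generate `R` as an ideal. -/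
def IsIUnimodular {R : Type*} [CommRing R] (I : Ideal R) {n : ℕ} (a : Fin n → R) : Prop :=
  (∀ i : Fin n, (i : ℕ) = 0 → a i - 1 ∈ I) ∧ (∀ i : Fin n, (i : ℕ) ≠ 0 → a i ∈ I) ∧
    Ideal.span (Set.range a) = ⊤

/-- The relative stable range condition `SRₙ(I)`. -/
def SRCond {R : Type*} [CommRing R] (n : ℕ) (I : Ideal R) : Prop :=
  ∀ a : Fin (n + 1) → R, IsIUnimodular I a →
    ∃ b : Fin n → R, (∀ i, b i ∈ I) ∧
      IsIUnimodular I (fun i : Fin n => a i.castSucc + a (Fin.last n) * b i)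

/-- Relative Gauss decomposition for `SL₂` under `sr(I) = 1`. -/
theorem relative_gauss_SL2 {R : Type*} [CommRing R] (I : Ideal R) (hSR : SRCond 1 I)
    (A : Matrix.SpecialLinearGroup (Fin 2) R)
    (hA : ∀ i j, (A : Matrix (Fin 2) (Fin 2) R) i j - (1 : Matrix (Fin 2) (Fin 2) R) i j ∈ I) :
    ∃ (a b c : R) (ε : Rˣ), a ∈ I ∧ b ∈ I ∧ c ∈ I ∧ (ε : R) - 1 ∈ I ∧
      (A : Matrix (Fin 2) (Fin 2) R) =
        (1 + Matrix.single 0 1 a) *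
          Matrix.diagonal ![(ε : R), ((ε⁻¹ : Rˣ) : R)] *
          (1 + Matrix.single 1 0 b) *
          (1 + Matrix.single 0 1 c) := by
  set M := (A : Matrix (Fin 2) (Fin 2) R) with hM
  have hdet : M 0 0 * M 1 1 - M 0 1 * M 1 0 = 1 := by
    have := A.2
    rwa [Matrix.det_fin_two] at this
  have hα : M 0 0 - 1 ∈ I := by simpa using hA 0 0
  have hβ : M 0 1 ∈ I := by simpa using hA 0 1
  have hγ : M 1 0 ∈ I := by simpa using hA 1 0
  have hδ : M 1 1 - 1 ∈ I := by simpa using hA 1 1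
  -- row (δ, γ) is I-unimodular
  have hrow : IsIUnimodular I ![M 1 1, M 1 0] := by
    refine ⟨?_, ?_, ?_⟩
    · intro i hi
      fin_cases i
      · simpa using hδ
      · simp at hi
    · intro i hi
      fin_cases i
      · simp at hi
      · simpa using hγ
    · rw [Ideal.eq_top_iff_one]
      have h0 : M 1 1 ∈ Ideal.span (Set.range ![M 1 1, M 1 0]) :=
        Ideal.subset_span ⟨0, rfl⟩
      have h1 : M 1 0 ∈ Ideal.span (Set.range ![M 1 1, M 1 0]) :=
        Ideal.subset_span ⟨1, rfl⟩
      have : M 0 0 * M 1 1 + (-(M 0 1)) * M 1 0 ∈ Ideal.span (Set.range ![M 1 1, M 1 0]) :=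
        Ideal.add_mem _ (Ideal.mul_mem_left _ _ h0) (Ideal.mul_mem_left _ _ h1)
      rwa [show M 0 0 * M 1 1 + (-(M 0 1)) * M 1 0 = 1 by linear_combination hdet] at this
  obtain ⟨bb, hbbI, hbu⟩ := hSR _ hrow
  set t := bb 0 with ht
  have htI : t ∈ I := hbbI 0
  have hval : (fun i : Fin 1 => (![M 1 1, M 1 0]) i.castSucc + (![M 1 1, M 1 0]) (Fin.last 1) * bb i) 0
      = M 1 1 + M 1 0 * t := by simp [ht, Fin.last]
  obtain ⟨h1', _, hspan⟩ := hbu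
  have hu1 : (M 1 1 + M 1 0 * t) - 1 ∈ I := by
    have := h1' 0 rfl
    simpa [Fin.last] using this
  have hunit : IsUnit (M 1 1 + M 1 0 * t) := by
    rw [← Ideal.span_singleton_eq_top]
    have hr : Set.range (fun i : Fin 1 => (![M 1 1, M 1 0]) i.castSucc + (![M 1 1, M 1 0]) (Fin.last 1) * bb i) = {M 1 1 + M 1 0 * t} := by
      rw [Set.range_unique]; simp [Fin.last, ht]
    rwa [hr] at hspan
  obtain ⟨u, hu⟩ := hunit
  have huv : (u : R) * (↑u⁻¹ : R) = 1 := u.mul_inv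
  have hvu : (↑u⁻¹ : R) * (u : R) = 1 := u.inv_mul
  refine ⟨(M 0 1 + M 0 0 * t) * (↑u⁻¹ : R), (↑u⁻¹ : R) * M 1 0, -t, u⁻¹, ?_, ?_, ?_, ?_, ?_⟩
  · exact Ideal.mul_mem_right _ _ (Ideal.add_mem _ hβ (Ideal.mul_mem_left _ _ htI))
  · exact Ideal.mul_mem_left _ _ hγ
  · exact I.neg_mem htI
  · -- u⁻¹ - 1 ∈ I
    have : (↑u⁻¹ : R) - 1 = (↑u⁻¹ : R) * (1 - (u : R)) := by
      rw [mul_sub, mul_one, hvu]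
    rw [this]
    exact Ideal.mul_mem_left _ _ (by simpa [hu] using I.neg_mem hu1)
  · rw [inv_inv]
    set w : R := (u : R) with hw
    set v : R := ((u⁻¹ : Rˣ) : R) with hv
    have hvw : v * w = 1 := hvu
    ext i j
    fin_cases i <;> fin_cases j <;>
      simp [Matrix.mul_apply, Fin.sum_univ_succ, Matrix.single, Matrix.one_apply,
        Matrix.diagonal]
    · linear_combination (-(M 0 1 + M 0 0 * t) * v * M 1 0 - M 0 0) * hvw +
        v * hdet + M 0 0 * v * hu
    · linear_combination ((M 0 1 + M 0 0 * t) * v * M 1 0 * t - (M 0 1 + M 0 0 * t) + t * M 0 0) * hvw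
        - t * v * hdet - t * M 0 0 * v * hu
    · linear_combination (-(M 1 0)) * hvw
    · linear_combination M 1 0 * t * hvw - hu
end

section
/- Let R be a commutative ring, I an ideal of R satisfying SR₁(I), and n ≥ 2. Then every element g of the relative elementary subgroup E(n,R,I) of SL(n,R) can be written as g = h · u₁ · v · u₂, where h is a diagonal matrix in SL(n,R) all of whose diagonal entries lie in 1 + I, u₁ and u₂ are upper unitriangular matrices all of whose off-diagonal entries lie in I, and v is a lower unitriangular matrix all of whose off-diagonal entries lie in I. (Theorem 1, case Φ = A_{n−1}.) -/
open Matrix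

/-- The elementary transvection `t_{ij}(ξ) = 1 + ξE_{ij}` as an element of `SL(n,R)`. -/
def tSL {R : Type*} [CommRing R] {n : ℕ} (i j : Fin n) (hij : i ≠ j) (ξ : R) :
    Matrix.SpecialLinearGroup (Fin n) R :=
  ⟨Matrix.transvection i j ξ, Matrix.det_transvection_of_ne i j hij ξ⟩

/-- The elementary subgroup `E(n,R)` of `SL(n,R)`. -/
def elemGroup (n : ℕ) (R : Type*) [CommRing R] :
    Subgroup (Matrix.SpecialLinearGroup (Fin n) R) :=
  Subgroup.closure { g | ∃ i j, ∃ hij : i ≠ j, ∃ ξ : R, g = tSL i j hij ξ }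

/-- The relative elementary subgroup `E(n,R,I)`: the normal closure in `E(n,R)` of the
subgroup generated by the elementary transvections of level `I`. -/
def relElemGroup (n : ℕ) {R : Type*} [CommRing R] (I : Ideal R) :
    Subgroup (Matrix.SpecialLinearGroup (Fin n) R) :=
  Subgroup.closure
    { g | ∃ e ∈ elemGroup n R, ∃ i j, ∃ hij : i ≠ j, ∃ s ∈ I, g = e * tSL i j hij s * e⁻¹ }

/-- `u` is upper unitriangular with all off-diagonal entries in `I`. -/
def IsUpperUniI {R : Type*} [CommRing R] (I : Ideal R) {n : ℕ}
    (u : Matrix (Fin n) (Fin n) R) : Prop :=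
  (∀ i, u i i = 1) ∧ (∀ i j : Fin n, j < i → u i j = 0) ∧ (∀ i j : Fin n, i < j → u i j ∈ I)

/-- `v` is lower unitriangular with all off-diagonal entries in `I`. -/
def IsLowerUniI {R : Type*} [CommRing R] (I : Ideal R) {n : ℕ}
    (v : Matrix (Fin n) (Fin n) R) : Prop :=
  (∀ i, v i i = 1) ∧ (∀ i j : Fin n, i < j → v i j = 0) ∧ (∀ i j : Fin n, j < i → v i j ∈ I)


namespace RGauss
open Matrix
variable {R : Type*} [CommRing R] {I : Ideal R} {n : ℕ}

/-! ### generic matrix lemmas -/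

lemma mul_vmv {m : Type*} [Fintype m] (A : Matrix m m R) (x y : m → R) :
    A * vecMulVec x y = vecMulVec (A *ᵥ x) y := by
  ext i j
  simp [Matrix.mul_apply, vecMulVec_apply, Matrix.mulVec, dotProduct, Finset.sum_mul, mul_assoc]

lemma vmv_mul {m : Type*} [Fintype m] (x y : m → R) (B : Matrix m m R) :
    vecMulVec x y * B = vecMulVec x (y ᵥ* B) := by
  ext i j
  simp [Matrix.mul_apply, vecMulVec_apply, Matrix.vecMul, dotProduct, Finset.mul_sum, mul_assoc]

lemma vmv_mul_vmv {m : Type*} [Fintype m] (x y x' y' : m → R) :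
    vecMulVec x y * vecMulVec x' y' = (y ⬝ᵥ x') • vecMulVec x y' := by
  rw [vmv_mul]
  ext i j
  simp [vecMulVec_apply, Matrix.vecMul, dotProduct, Finset.sum_mul, Finset.mul_sum]
  exact Finset.sum_congr rfl (fun k _ => by ring)

lemma vmv_neg_left {m : Type*} (x y : m → R) : vecMulVec (-x) y = -vecMulVec x y := by
  ext i j; simp [vecMulVec_apply]

lemma one_sub_vmv {m : Type*} [Fintype m] [DecidableEq m] (x y : m → R) :
    (1 : Matrix m m R) - vecMulVec x y = 1 + vecMulVec (-x) y := by
  rw [vmv_neg_left, sub_eq_add_neg]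

lemma rank1_inv {m : Type*} [Fintype m] [DecidableEq m] (x y : m → R) (h : y ⬝ᵥ x = 0) :
    (1 + vecMulVec x y) * (1 - vecMulVec x y) = 1 := by
  have h2 : vecMulVec x y * vecMulVec x y = 0 := by
    rw [vmv_mul_vmv, h, zero_smul]
  calc (1 + vecMulVec x y) * (1 - vecMulVec x y)
      = 1 - vecMulVec x y * vecMulVec x y := by noncomm_ring
    _ = 1 := by rw [h2, sub_zero]

lemma single_dot (x : Fin (n+1) → R) :
    (Pi.single (Fin.last n) (1:R)) ⬝ᵥ x = x (Fin.last n) := by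
  simp [dotProduct, Pi.single_apply, ite_mul]

lemma dot_single (z : Fin (n+1) → R) :
    z ⬝ᵥ (Pi.single (Fin.last n) (1:R)) = z (Fin.last n) := by
  simp [dotProduct, Pi.single_apply, mul_ite]

lemma single_vecMul (B : Matrix (Fin (n+1)) (Fin (n+1)) R) (j : Fin (n+1)) :
    ((Pi.single (Fin.last n) (1:R)) ᵥ* B) j = B (Fin.last n) j := by
  simp [Matrix.vecMul, dotProduct, Pi.single_apply, ite_mul]

lemma mulVec_single (C : Matrix (Fin (n+1)) (Fin (n+1)) R) (i : Fin (n+1)) :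
    (C *ᵥ (Pi.single (Fin.last n) (1:R))) i = C i (Fin.last n) := by
  simp [Matrix.mulVec, dotProduct, Pi.single_apply, mul_ite]

lemma swapUpper (B : Matrix (Fin (n+1)) (Fin (n+1)) R)
    (hB : ∀ j, B (Fin.last n) j = (Pi.single (Fin.last n) (1:R) : Fin (n+1) → R) j)
    (x : Fin (n+1) → R) :
    B * (1 + vecMulVec x (Pi.single (Fin.last n) 1)) =
      (1 + vecMulVec (B *ᵥ x) (Pi.single (Fin.last n) 1)) * B := by
  rw [mul_add, mul_one, add_mul, one_mul, mul_vmv, vmv_mul]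
  have he : (Pi.single (Fin.last n) (1:R)) ᵥ* B = Pi.single (Fin.last n) 1 := by
    ext j; rw [single_vecMul, hB j]
  rw [he]

lemma swapLower (C : Matrix (Fin (n+1)) (Fin (n+1)) R)
    (hC : ∀ i, C i (Fin.last n) = (Pi.single (Fin.last n) (1:R) : Fin (n+1) → R) i)
    (z z'' : Fin (n+1) → R) (hz : z'' ᵥ* C = z) :
    C * (1 + vecMulVec (Pi.single (Fin.last n) 1) z) =
      (1 + vecMulVec (Pi.single (Fin.last n) 1) z'') * C := by
  rw [mul_add, mul_one, add_mul, one_mul, mul_vmv, vmv_mul, hz]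
  have he : C *ᵥ (Pi.single (Fin.last n) (1:R)) = Pi.single (Fin.last n) 1 := by
    ext i; rw [mulVec_single, hC i]
  rw [he]

lemma diag_conj {m : Type*} [Fintype m] [DecidableEq m] (d dinv : m → R)
    (h : ∀ i, d i * dinv i = 1) (X : Matrix m m R) :
    X * diagonal d = diagonal d * Matrix.of (fun i j => dinv i * X i j * d j) := by
  ext i j
  rw [Matrix.mul_diagonal, Matrix.diagonal_mul]
  show X i j * d j = d i * (dinv i * X i j * d j)
  calc X i j * d j = (d i * dinv i) * (X i j * d j) := by rw [h i, one_mul]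
    _ = d i * (dinv i * X i j * d j) := by ring

lemma conj_eq {m : Type*} [Fintype m] [DecidableEq m] (d dinv : m → R) (X : Matrix m m R) :
    (Matrix.of (fun i j => dinv i * X i j * d j)) = diagonal dinv * X * diagonal d := by
  ext i j
  rw [Matrix.mul_diagonal, Matrix.diagonal_mul]
  simp [mul_assoc]

lemma conj_det {m : Type*} [Fintype m] [DecidableEq m] (d dinv : m → R)
    (h : ∀ i, d i * dinv i = 1) (X : Matrix m m R) :
    (Matrix.of (fun i j => dinv i * X i j * d j)).det = X.det := by
  rw [conj_eq, Matrix.det_mul, Matrix.det_mul, Matrix.det_diagonal, Matrix.det_diagonal]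
  have h3 : (∏ i, dinv i) * X.det * ∏ i, d i = X.det * ∏ i, (d i * dinv i) := by
    rw [Finset.prod_mul_distrib]; ring
  rw [h3, Finset.prod_eq_one (fun i _ => h i), mul_one]

/-! ### congruence mod I -/

def Cong (I : Ideal R) {n : ℕ} (A : Matrix (Fin n) (Fin n) R) : Prop :=
  ∀ i j, A i j - (1 : Matrix (Fin n) (Fin n) R) i j ∈ I

lemma Cong.mul {A B : Matrix (Fin n) (Fin n) R} (hA : Cong I A) (hB : Cong I B) :
    Cong I (A * B) := by
  intro i j
  have key : (A * B) i j - (1 : Matrix (Fin n) (Fin n) R) i j =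
      (∑ k, (A i k - (1 : Matrix (Fin n) (Fin n) R) i k) * B k j) +
        (B i j - (1 : Matrix (Fin n) (Fin n) R) i j) := by
    have h1 : (∑ k, (1 : Matrix (Fin n) (Fin n) R) i k * B k j) = B i j := by
      calc (∑ k, (1 : Matrix (Fin n) (Fin n) R) i k * B k j)
          = ((1 : Matrix (Fin n) (Fin n) R) * B) i j := (Matrix.mul_apply).symm
        _ = B i j := by rw [Matrix.one_mul]
    simp only [sub_mul, Finset.sum_sub_distrib, h1, Matrix.mul_apply]
    ring
  rw [key]
  exact I.add_mem (Ideal.sum_mem _ fun k _ => I.mul_mem_right _ (hA i k)) (hB i j)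

lemma Cong.diag {A : Matrix (Fin n) (Fin n) R} (hA : Cong I A) (i : Fin n) :
    A i i - 1 ∈ I := by simpa using hA i i

lemma Cong.offDiag {A : Matrix (Fin n) (Fin n) R} (hA : Cong I A) {i j : Fin n} (h : i ≠ j) :
    A i j ∈ I := by simpa [Matrix.one_apply, h] using hA i j

lemma cong_of_conds {A : Matrix (Fin n) (Fin n) R} (h1 : ∀ i, A i i - 1 ∈ I)
    (h2 : ∀ i j, i ≠ j → A i j ∈ I) : Cong I A := by
  intro i j
  by_cases h : i = j
  · subst h; simpa using h1 i
  · simpa [Matrix.one_apply, h] using h2 i j h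

lemma cong_submatrix {A : Matrix (Fin (n+1)) (Fin (n+1)) R} (hA : Cong I A) :
    Cong I (A.submatrix Fin.castSucc Fin.castSucc) := by
  refine cong_of_conds (fun i => hA.diag i.castSucc) (fun i j hij => ?_)
  exact hA.offDiag (fun h => hij (Fin.castSucc_injective _ h))

lemma mul_sub_one_mem {p q : R} (hp : p - 1 ∈ I) (hq : q - 1 ∈ I) : p * q - 1 ∈ I := by
  have h : p * q - 1 = (p - 1) * q + (q - 1) := by ring
  rw [h]
  exact I.add_mem (I.mul_mem_right _ hp) hq

/-! ### unitriangular lemmas -/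

lemma one_upper : IsUpperUniI I (1 : Matrix (Fin n) (Fin n) R) :=
  ⟨fun i => Matrix.one_apply_eq i, fun i j hij => Matrix.one_apply_ne (ne_of_gt hij),
    fun i j hij => by rw [Matrix.one_apply_ne (ne_of_lt hij)]; exact I.zero_mem⟩

lemma one_lower : IsLowerUniI I (1 : Matrix (Fin n) (Fin n) R) :=
  ⟨fun i => Matrix.one_apply_eq i, fun i j hij => Matrix.one_apply_ne (ne_of_lt hij),
    fun i j hij => by rw [Matrix.one_apply_ne (ne_of_gt hij)]; exact I.zero_mem⟩

lemma upperCong {u : Matrix (Fin n) (Fin n) R} (hu : IsUpperUniI I u) : Cong I u := by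
  refine cong_of_conds (fun i => by rw [hu.1 i]; simp) (fun i j h => ?_)
  rcases lt_or_gt_of_ne h with h' | h'
  · exact hu.2.2 i j h'
  · rw [hu.2.1 i j h']; exact I.zero_mem

lemma lowerCong {v : Matrix (Fin n) (Fin n) R} (hv : IsLowerUniI I v) : Cong I v := by
  refine cong_of_conds (fun i => by rw [hv.1 i]; simp) (fun i j h => ?_)
  rcases lt_or_gt_of_ne h with h' | h'
  · rw [hv.2.1 i j h']; exact I.zero_mem
  · exact hv.2.2 i j h'

lemma upperMul {u u' : Matrix (Fin n) (Fin n) R} (hu : IsUpperUniI I u)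
    (hu' : IsUpperUniI I u') : IsUpperUniI I (u * u') := by
  refine ⟨fun i => ?_, fun i j hij => ?_, fun i j hij => ?_⟩
  · rw [Matrix.mul_apply]
    rw [Finset.sum_eq_single i]
    · rw [hu.1, hu'.1, one_mul]
    · intro k _ hk
      rcases lt_or_gt_of_ne hk with h' | h'
      · rw [hu.2.1 i k h', zero_mul]
      · rw [hu'.2.1 k i h', mul_zero]
    · simp
  · rw [Matrix.mul_apply]
    apply Finset.sum_eq_zero
    intro k _
    rcases lt_or_ge k i with h' | h'
    · rw [hu.2.1 i k h', zero_mul]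
    · rw [hu'.2.1 k j (lt_of_lt_of_le hij h'), mul_zero]
  · rw [Matrix.mul_apply]
    apply Ideal.sum_mem
    intro k _
    rcases lt_trichotomy k i with h' | h' | h'
    · rw [hu.2.1 i k h', zero_mul]; exact I.zero_mem
    · subst h'; rw [hu.1]; rw [one_mul]; exact hu'.2.2 k j hij
    · exact I.mul_mem_right _ (hu.2.2 i k h')

lemma isLowerUniI_iff_transpose {v : Matrix (Fin n) (Fin n) R} :
    IsLowerUniI I v ↔ IsUpperUniI I vᵀ := by
  constructor
  · rintro ⟨h1, h2, h3⟩
    exact ⟨fun i => h1 i, fun i j hij => h2 j i hij, fun i j hij => h3 j i hij⟩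
  · rintro ⟨h1, h2, h3⟩
    exact ⟨fun i => h1 i, fun i j hij => h2 j i hij, fun i j hij => h3 j i hij⟩

lemma lowerMul {v v' : Matrix (Fin n) (Fin n) R} (hv : IsLowerUniI I v)
    (hv' : IsLowerUniI I v') : IsLowerUniI I (v * v') := by
  rw [isLowerUniI_iff_transpose] at *
  rw [Matrix.transpose_mul]
  exact upperMul hv' hv

lemma upperDet {u : Matrix (Fin n) (Fin n) R} (hu : IsUpperUniI I u) : u.det = 1 := by
  rw [Matrix.det_of_upperTriangular (fun i j (h : (id j : Fin n) < id i) => hu.2.1 i j h)]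
  simp [hu.1]

lemma lowerDet {v : Matrix (Fin n) (Fin n) R} (hv : IsLowerUniI I v) : v.det = 1 := by
  rw [← Matrix.det_transpose]
  exact upperDet (isLowerUniI_iff_transpose.mp hv)

/-! ### corner extension -/

def ext1 {R : Type*} [CommRing R] {n : ℕ} (X : Matrix (Fin n) (Fin n) R) :
    Matrix (Fin (n+1)) (Fin (n+1)) R :=
  Matrix.of fun i j =>
    if hi : i = Fin.last n then (if j = Fin.last n then 1 else 0)
    else if hj : j = Fin.last n then 0 else X (i.castPred hi) (j.castPred hj)

@[simp] lemma ext1_cc (X : Matrix (Fin n) (Fin n) R) (i j : Fin n) :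
    ext1 X i.castSucc j.castSucc = X i j := by
  simp [ext1, (Fin.castSucc_lt_last i).ne, (Fin.castSucc_lt_last j).ne]

@[simp] lemma ext1_ll (X : Matrix (Fin n) (Fin n) R) :
    ext1 X (Fin.last n) (Fin.last n) = 1 := by simp [ext1]

@[simp] lemma ext1_lc (X : Matrix (Fin n) (Fin n) R) (j : Fin n) :
    ext1 X (Fin.last n) j.castSucc = 0 := by
  simp [ext1, (Fin.castSucc_lt_last j).ne]

@[simp] lemma ext1_cl (X : Matrix (Fin n) (Fin n) R) (i : Fin n) :
    ext1 X i.castSucc (Fin.last n) = 0 := by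
  simp [ext1, (Fin.castSucc_lt_last i).ne]

lemma ext1_lastRowE (X : Matrix (Fin n) (Fin n) R) :
    ∀ j, ext1 X (Fin.last n) j = (Pi.single (Fin.last n) (1:R) : Fin (n+1) → R) j := by
  intro j
  induction j using Fin.lastCases with
  | last => simp [Pi.single_apply]
  | cast j' => simp [Pi.single_apply, (Fin.castSucc_lt_last j').ne]

lemma ext1_lastColE (X : Matrix (Fin n) (Fin n) R) :
    ∀ i, ext1 X i (Fin.last n) = (Pi.single (Fin.last n) (1:R) : Fin (n+1) → R) i := by
  intro i
  induction i using Fin.lastCases with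
  | last => simp [Pi.single_apply]
  | cast i' => simp [Pi.single_apply, (Fin.castSucc_lt_last i').ne]

lemma ext1_mul (X Y : Matrix (Fin n) (Fin n) R) :
    ext1 X * ext1 Y = ext1 (X * Y) := by
  ext i j
  rw [Matrix.mul_apply, Fin.sum_univ_castSucc]
  induction i using Fin.lastCases with
  | last =>
    induction j using Fin.lastCases with
    | last => simp
    | cast j' => simp
  | cast i' =>
    induction j using Fin.lastCases with
    | last => simp
    | cast j' => simp [Matrix.mul_apply]

lemma ext1_submatrix (X : Matrix (Fin n) (Fin n) R) :
    (ext1 X).submatrix Fin.castSucc Fin.castSucc = X := by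
  ext i j; simp [Matrix.submatrix_apply]

lemma det_lastRow (A : Matrix (Fin (n+1)) (Fin (n+1)) R)
    (h : ∀ j : Fin n, A (Fin.last n) j.castSucc = 0) :
    A.det = A (Fin.last n) (Fin.last n) * (A.submatrix Fin.castSucc Fin.castSucc).det := by
  rw [Matrix.det_succ_row A (Fin.last n), Fin.sum_univ_castSucc]
  have h0 : ∀ j : Fin n, ((-1 : R) ^ ((Fin.last n : ℕ) + (j.castSucc : ℕ)) *
      A (Fin.last n) j.castSucc *
      (A.submatrix (Fin.last n).succAbove j.castSucc.succAbove).det) = 0 := by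
    intro j; rw [h j, mul_zero, zero_mul]
  rw [Finset.sum_eq_zero (fun j _ => h0 j), zero_add]
  have h1 : ((-1 : R) ^ ((Fin.last n : ℕ) + ((Fin.last n) : ℕ))) = 1 :=
    Even.neg_one_pow ⟨n, by simp [Fin.val_last]⟩
  rw [h1, one_mul, Fin.succAbove_last]

lemma det_ext1 (X : Matrix (Fin n) (Fin n) R) : (ext1 X).det = X.det := by
  rw [det_lastRow _ (fun j => ext1_lc X j), ext1_ll, one_mul, ext1_submatrix]

lemma ext1_upper {X : Matrix (Fin n) (Fin n) R} (hX : IsUpperUniI I X) :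
    IsUpperUniI I (ext1 X) := by
  refine ⟨fun i => ?_, fun i j hij => ?_, fun i j hij => ?_⟩
  · induction i using Fin.lastCases with
    | last => simp
    | cast i' => rw [ext1_cc]; exact hX.1 i'
  · induction i using Fin.lastCases with
    | last =>
      induction j using Fin.lastCases with
      | last => exact absurd hij (lt_irrefl _)
      | cast j' => simp
    | cast i' =>
      induction j using Fin.lastCases with
      | last => exact absurd hij (not_lt.mpr (Fin.castSucc_lt_last i').le)
      | cast j' => rw [ext1_cc]; exact hX.2.1 i' j' (Fin.castSucc_lt_castSucc_iff.mp hij)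
  · induction i using Fin.lastCases with
    | last =>
      exact absurd hij (not_lt.mpr (Fin.le_last j))
    | cast i' =>
      induction j using Fin.lastCases with
      | last => rw [ext1_cl]; exact I.zero_mem
      | cast j' => rw [ext1_cc]; exact hX.2.2 i' j' (Fin.castSucc_lt_castSucc_iff.mp hij)

lemma ext1_lower {X : Matrix (Fin n) (Fin n) R} (hX : IsLowerUniI I X) :
    IsLowerUniI I (ext1 X) := by
  refine ⟨fun i => ?_, fun i j hij => ?_, fun i j hij => ?_⟩
  · induction i using Fin.lastCases with
    | last => simp
    | cast i' => rw [ext1_cc]; exact hX.1 i'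
  · induction i using Fin.lastCases with
    | last => exact absurd hij (not_lt.mpr (Fin.le_last j))
    | cast i' =>
      induction j using Fin.lastCases with
      | last => simp
      | cast j' => rw [ext1_cc]; exact hX.2.1 i' j' (Fin.castSucc_lt_castSucc_iff.mp hij)
  · induction i using Fin.lastCases with
    | last =>
      induction j using Fin.lastCases with
      | last => exact absurd hij (lt_irrefl _)
      | cast j' => rw [ext1_lc]; exact I.zero_mem
    | cast i' =>
      induction j using Fin.lastCases with
      | last => exact absurd hij (not_lt.mpr (Fin.castSucc_lt_last i').le)
      | cast j' => rw [ext1_cc]; exact hX.2.2 i' j' (Fin.castSucc_lt_castSucc_iff.mp hij)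

lemma ext1_diag_offdiag {X : Matrix (Fin n) (Fin n) R}
    (h0 : ∀ i j, i ≠ j → X i j = 0) (h1 : ∀ i, X i i - 1 ∈ I) :
    (∀ i j, i ≠ j → ext1 X i j = 0) ∧ (∀ i, ext1 X i i - 1 ∈ I) := by
  constructor
  · intro i j hij
    induction i using Fin.lastCases with
    | last =>
      induction j using Fin.lastCases with
      | last => exact absurd rfl hij
      | cast j' => simp
    | cast i' =>
      induction j using Fin.lastCases with
      | last => simp
      | cast j' =>
        rw [ext1_cc]
        exact h0 i' j' (fun h => hij (by rw [h]))
  · intro i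
    induction i using Fin.lastCases with
    | last => simp
    | cast i' => rw [ext1_cc]; exact h1 i'

/-! ### rank one unitriangulars -/

lemma upper_rank1 (x : Fin (n+1) → R) (hxI : ∀ i, x i ∈ I) (hxl : x (Fin.last n) = 0) :
    IsUpperUniI I (1 + vecMulVec x (Pi.single (Fin.last n) 1)) := by
  refine ⟨fun i => ?_, fun i j hij => ?_, fun i j hij => ?_⟩
  · by_cases h : i = Fin.last n
    · subst h; simp [vecMulVec_apply, Pi.single_apply, hxl]
    · simp [vecMulVec_apply, Pi.single_apply, h]
  · have hj : j ≠ Fin.last n := fun h => (not_lt.mpr (Fin.le_last i)) (h ▸ hij)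
    rw [Matrix.add_apply, Matrix.one_apply_ne (ne_of_gt hij), vecMulVec_apply,
      Pi.single_apply, if_neg hj, mul_zero, add_zero]
  · rw [Matrix.add_apply, Matrix.one_apply_ne (ne_of_lt hij), vecMulVec_apply,
      Pi.single_apply, zero_add]
    by_cases hj : j = Fin.last n
    · rw [if_pos hj, mul_one]; exact hxI i
    · rw [if_neg hj, mul_zero]; exact I.zero_mem

lemma lower_rank1 (z : Fin (n+1) → R) (hzI : ∀ i, z i ∈ I) (hzl : z (Fin.last n) = 0) :
    IsLowerUniI I (1 + vecMulVec (Pi.single (Fin.last n) 1) z) := by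
  refine ⟨fun i => ?_, fun i j hij => ?_, fun i j hij => ?_⟩
  · by_cases h : i = Fin.last n
    · subst h; simp [vecMulVec_apply, Pi.single_apply, hzl]
    · simp [vecMulVec_apply, Pi.single_apply, h]
  · have hi : i ≠ Fin.last n := fun h => (not_lt.mpr (Fin.le_last j)) (h ▸ hij)
    rw [Matrix.add_apply, Matrix.one_apply_ne (ne_of_lt hij), vecMulVec_apply,
      Pi.single_apply, if_neg hi, zero_mul, add_zero]
  · rw [Matrix.add_apply, Matrix.one_apply_ne (ne_of_gt hij), vecMulVec_apply,
      Pi.single_apply, zero_add]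
    by_cases hi : i = Fin.last n
    · rw [if_pos hi, one_mul]; exact hzI j
    · rw [if_neg hi, zero_mul]; exact I.zero_mem

lemma cong_rank1_left (x y : Fin (n+1) → R) (hxI : ∀ i, x i ∈ I) :
    Cong I (1 + vecMulVec x y) := by
  refine cong_of_conds (fun i => ?_) (fun i j hij => ?_)
  · rw [Matrix.add_apply, Matrix.one_apply_eq, vecMulVec_apply, add_sub_cancel_left]
    exact I.mul_mem_right _ (hxI i)
  · rw [Matrix.add_apply, Matrix.one_apply_ne hij, vecMulVec_apply, zero_add]
    exact I.mul_mem_right _ (hxI i)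

lemma cong_rank1_right (x y : Fin (n+1) → R) (hyI : ∀ j, y j ∈ I) :
    Cong I (1 + vecMulVec x y) := by
  refine cong_of_conds (fun i => ?_) (fun i j hij => ?_)
  · rw [Matrix.add_apply, Matrix.one_apply_eq, vecMulVec_apply, add_sub_cancel_left]
    exact I.mul_mem_left _ (hyI i)
  · rw [Matrix.add_apply, Matrix.one_apply_ne hij, vecMulVec_apply, zero_add]
    exact I.mul_mem_left _ (hyI j)

/-! ### conjugation by diagonal -/

lemma conj_upper {k : ℕ} {d dinv : Fin k → R} (h : ∀ i, d i * dinv i = 1)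
    {X : Matrix (Fin k) (Fin k) R} (hX : IsUpperUniI I X) :
    IsUpperUniI I (Matrix.of fun i j => dinv i * X i j * d j) := by
  refine ⟨fun i => ?_, fun i j hij => ?_, fun i j hij => ?_⟩
  · show dinv i * X i i * d i = 1
    rw [hX.1 i, mul_one, mul_comm, h i]
  · show dinv i * X i j * d j = 0
    rw [hX.2.1 i j hij, mul_zero, zero_mul]
  · show dinv i * X i j * d j ∈ I
    exact I.mul_mem_right _ (I.mul_mem_left _ (hX.2.2 i j hij))

lemma conj_lower {k : ℕ} {d dinv : Fin k → R} (h : ∀ i, d i * dinv i = 1)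
    {X : Matrix (Fin k) (Fin k) R} (hX : IsLowerUniI I X) :
    IsLowerUniI I (Matrix.of fun i j => dinv i * X i j * d j) := by
  refine ⟨fun i => ?_, fun i j hij => ?_, fun i j hij => ?_⟩
  · show dinv i * X i i * d i = 1
    rw [hX.1 i, mul_one, mul_comm, h i]
  · show dinv i * X i j * d j = 0
    rw [hX.2.1 i j hij, mul_zero, zero_mul]
  · show dinv i * X i j * d j ∈ I
    exact I.mul_mem_right _ (I.mul_mem_left _ (hX.2.2 i j hij))

lemma conj_rowE {d dinv : Fin (n+1) → R} (h : ∀ i, d i * dinv i = 1)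
    {X : Matrix (Fin (n+1)) (Fin (n+1)) R}
    (hX : ∀ j, X (Fin.last n) j = (Pi.single (Fin.last n) (1:R) : Fin (n+1) → R) j) :
    ∀ j, (Matrix.of fun i j => dinv i * X i j * d j) (Fin.last n) j =
      (Pi.single (Fin.last n) (1:R) : Fin (n+1) → R) j := by
  intro j
  show dinv (Fin.last n) * X (Fin.last n) j * d j = _
  rw [hX j]
  by_cases hj : j = Fin.last n
  · subst hj
    simp only [Pi.single_eq_same, mul_one]
    rw [mul_comm]
    exact h _
  · rw [Pi.single_eq_of_ne hj, mul_zero, zero_mul]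

lemma conj_colE {d dinv : Fin (n+1) → R} (h : ∀ i, d i * dinv i = 1)
    {X : Matrix (Fin (n+1)) (Fin (n+1)) R}
    (hX : ∀ i, X i (Fin.last n) = (Pi.single (Fin.last n) (1:R) : Fin (n+1) → R) i) :
    ∀ i, (Matrix.of fun i j => dinv i * X i j * d j) i (Fin.last n) =
      (Pi.single (Fin.last n) (1:R) : Fin (n+1) → R) i := by
  intro i
  show dinv i * X i (Fin.last n) * d (Fin.last n) = _
  rw [hX i]
  by_cases hi : i = Fin.last n
  · subst hi
    simp only [Pi.single_eq_same, mul_one]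
    rw [mul_comm]
    exact h _
  · rw [Pi.single_eq_of_ne hi, mul_zero, zero_mul]

lemma rowE_mulVec {X : Matrix (Fin (n+1)) (Fin (n+1)) R}
    (hX : ∀ j, X (Fin.last n) j = (Pi.single (Fin.last n) (1:R) : Fin (n+1) → R) j)
    (v : Fin (n+1) → R) : (X *ᵥ v) (Fin.last n) = v (Fin.last n) := by
  show (X (Fin.last n)) ⬝ᵥ v = _
  have h : X (Fin.last n) = Pi.single (Fin.last n) 1 := funext hX
  rw [h, single_dot]

lemma colE_mulVec_single {X : Matrix (Fin (n+1)) (Fin (n+1)) R}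
    (hX : ∀ i, X i (Fin.last n) = (Pi.single (Fin.last n) (1:R) : Fin (n+1) → R) i) :
    X *ᵥ (Pi.single (Fin.last n) (1:R)) = Pi.single (Fin.last n) 1 := by
  ext i
  rw [mulVec_single, hX i]


lemma vmv_neg_right {m : Type*} (x y : m → R) : vecMulVec x (-y) = -vecMulVec x y := by
  ext i j; simp [vecMulVec_apply]

lemma one_sub_vmv_right {m : Type*} [Fintype m] [DecidableEq m] (x y : m → R) :
    (1 : Matrix m m R) - vecMulVec x y = 1 + vecMulVec x (-y) := by
  rw [vmv_neg_right, sub_eq_add_neg]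

lemma mulVec_memI {k : ℕ} {v : Fin k → R} (M : Matrix (Fin k) (Fin k) R)
    (hv : ∀ i, v i ∈ I) : ∀ i, (M *ᵥ v) i ∈ I := by
  intro i
  show (M i) ⬝ᵥ v ∈ I
  exact Ideal.sum_mem _ fun k _ => I.mul_mem_left _ (hv k)

lemma vecMul_memI {k : ℕ} {v : Fin k → R} (M : Matrix (Fin k) (Fin k) R)
    (hv : ∀ i, v i ∈ I) : ∀ j, (v ᵥ* M) j ∈ I := by
  intro j
  show v ⬝ᵥ (fun i => M i j) ∈ I
  exact Ideal.sum_mem _ fun k _ => I.mul_mem_right _ (hv k)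

lemma exists_pivot (hSR : SRCond 1 I) (c d r : R) (hc : c - 1 ∈ I) (hd : d ∈ I)
    (h1 : c * r + d = 1) : ∃ b ∈ I, ∃ a' : R, (c + d * b) * a' = 1 ∧ (c + d * b) - 1 ∈ I := by
  have huni : IsIUnimodular I ![c, d] := by
    refine ⟨?_, ?_, ?_⟩
    · intro i hi
      have h0 : i = 0 := by
        apply Fin.ext; simpa using hi
      subst h0; simpa using hc
    · intro i hi
      have h1' : i = 1 := by
        apply Fin.ext
        have h2 := i.isLt
        rw [Fin.val_one]
        omega
      subst h1'; simpa using hd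
    · rw [Ideal.eq_top_iff_one]
      have hcm : c ∈ Ideal.span (Set.range ![c, d]) :=
        Ideal.subset_span ⟨0, by simp⟩
      have hdm : d ∈ Ideal.span (Set.range ![c, d]) :=
        Ideal.subset_span ⟨1, by simp⟩
      have h3 : c * r + d ∈ Ideal.span (Set.range ![c, d]) :=
        Ideal.add_mem _ (Ideal.mul_mem_right r _ hcm) hdm
      rwa [h1] at h3
  obtain ⟨b, hbI, hres⟩ := hSR ![c, d] huni
  have hval : ∀ i : Fin 1, ![c, d] i.castSucc + ![c, d] (Fin.last 1) * b i
      = c + d * b 0 := by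
    intro i
    have h0 : i = 0 := Subsingleton.elim _ _
    subst h0
    norm_num [Fin.last]
  refine ⟨b 0, hbI 0, ?_⟩
  have hsub : c + d * b 0 - 1 ∈ I := by
    have h := hres.1 0 rfl
    simpa [hval 0] using h
  have hspan := hres.2.2
  have hu : IsUnit (c + d * b 0) := by
    have h01 : Set.range (fun i : Fin 1 => ![c, d] i.castSucc + ![c, d] (Fin.last 1) * b i)
        = {c + d * b 0} := by
      rw [Set.range_unique]
      simp only [hval]
    rw [h01, Ideal.span_singleton_eq_top] at hspan
    exact hspan
  obtain ⟨a', ha'⟩ := hu.exists_right_inv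
  exact ⟨a', ha', hsub⟩

theorem stepB (hSR : SRCond 1 I) :
    ∀ (N : ℕ) (g : Matrix (Fin N) (Fin N) R), g.det = 1 → Cong I g →
      ∃ h u₁ v u₂ : Matrix (Fin N) (Fin N) R,
        g = h * u₁ * v * u₂ ∧ (∀ i j, i ≠ j → h i j = 0) ∧ (∀ i, h i i - 1 ∈ I) ∧
        IsUpperUniI I u₁ ∧ IsLowerUniI I v ∧ IsUpperUniI I u₂ := by
  intro N
  induction N with
  | zero =>
    intro g hdet hcong
    exact ⟨g, 1, 1, 1, by simp, fun i => i.elim0, fun i => i.elim0, one_upper, one_lower,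
      one_upper⟩
  | succ n ih =>
    cases n with
    | zero =>
      intro g hdet hcong
      refine ⟨g, 1, 1, 1, by simp, fun i j hij =>
        absurd ((Fin.fin_one_eq_zero i).trans (Fin.fin_one_eq_zero j).symm) hij,
        fun i => ?_, one_upper, one_lower, one_upper⟩
      have h0 : i = 0 := Fin.fin_one_eq_zero i
      subst h0
      have h1 : g 0 0 = 1 := by rw [← Matrix.det_fin_one g]; exact hdet
      rw [h1, sub_self]; exact I.zero_mem
    | succ m =>
      intro g hdet hcong
      -- Notation
      have hadj : g * g.adjugate = 1 := by
        rw [Matrix.mul_adjugate, hdet, one_smul]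
      set dd : R := ∑ k : Fin (m+1), g (Fin.last (m+1)) k.castSucc *
        g.adjugate k.castSucc (Fin.last (m+1)) with hdd_def
      have hadjLL : dd + g (Fin.last (m+1)) (Fin.last (m+1)) *
          g.adjugate (Fin.last (m+1)) (Fin.last (m+1)) = 1 := by
        have h := congrArg (fun M : Matrix (Fin (m+2)) (Fin (m+2)) R =>
          M (Fin.last (m+1)) (Fin.last (m+1))) hadj
        beta_reduce at h
        rw [Matrix.mul_apply, Matrix.one_apply_eq, Fin.sum_univ_castSucc] at h
        rw [hdd_def]
        exact h
      have hc : g (Fin.last (m+1)) (Fin.last (m+1)) - 1 ∈ I := hcong.diag _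
      have hddI : dd ∈ I := by
        rw [hdd_def]
        exact Ideal.sum_mem _ fun k _ =>
          I.mul_mem_right _ (hcong.offDiag (Fin.castSucc_lt_last k).ne')
      have h1 : g (Fin.last (m+1)) (Fin.last (m+1)) *
          g.adjugate (Fin.last (m+1)) (Fin.last (m+1)) + dd = 1 := by
        rw [add_comm]; exact hadjLL
      obtain ⟨b, hbI, a', ha', hsub⟩ := exists_pivot hSR _ dd _ hc hddI h1
      set aa : R := g (Fin.last (m+1)) (Fin.last (m+1)) + dd * b with haa_def
      -- the column-modification vector x
      set x : Fin (m+2) → R :=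
        fun k => Fin.lastCases 0 (fun k' => g.adjugate k'.castSucc (Fin.last (m+1)) * b) k
        with hx_def
      have hxI : ∀ k, x k ∈ I := by
        intro k
        induction k using Fin.lastCases with
        | last => rw [hx_def]; simp
        | cast k' =>
          rw [hx_def]
          simp only [Fin.lastCases_castSucc]
          exact I.mul_mem_left _ hbI
      have hxl : x (Fin.last (m+1)) = 0 := by rw [hx_def]; simp
      have hgxL : (g *ᵥ x) (Fin.last (m+1)) = dd * b := by
        show (g (Fin.last (m+1))) ⬝ᵥ x = dd * b
        rw [dotProduct, Fin.sum_univ_castSucc]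
        rw [hx_def]
        simp only [Fin.lastCases_castSucc, Fin.lastCases_last, mul_zero, add_zero]
        rw [hdd_def, Finset.sum_mul]
        exact Finset.sum_congr rfl (fun k _ => by ring)
      set u₁ : Matrix (Fin (m+2)) (Fin (m+2)) R :=
        1 + vecMulVec x (Pi.single (Fin.last (m+1)) 1) with hu₁_def
      have hu₁ : IsUpperUniI I u₁ := upper_rank1 x hxI hxl
      have hg₁entry : ∀ i j, (g * u₁) i j =
          g i j + (g *ᵥ x) i * (Pi.single (Fin.last (m+1)) (1:R) : Fin (m+2) → R) j := by
        intro i j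
        rw [hu₁_def, mul_add, mul_one, mul_vmv, Matrix.add_apply, vecMulVec_apply]
      have hg₁LL : (g * u₁) (Fin.last (m+1)) (Fin.last (m+1)) = aa := by
        rw [hg₁entry, hgxL, Pi.single_eq_same, mul_one, haa_def]
      have hg₁cong : Cong I (g * u₁) := hcong.mul (upperCong hu₁)
      have hg₁det : (g * u₁).det = 1 := by
        rw [Matrix.det_mul, hdet, upperDet hu₁, one_mul]
      -- the row-clearing vector z
      set z : Fin (m+2) → R :=
        fun j => Fin.lastCases 0 (fun j' => -(a' * (g * u₁) (Fin.last (m+1)) j'.castSucc)) j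
        with hz_def
      have hzI : ∀ j, z j ∈ I := by
        intro j
        induction j using Fin.lastCases with
        | last => rw [hz_def]; simp
        | cast j' =>
          rw [hz_def]
          simp only [Fin.lastCases_castSucc]
          exact I.neg_mem (I.mul_mem_left _ (hg₁cong.offDiag (Fin.castSucc_lt_last j').ne'))
      have hzl : z (Fin.last (m+1)) = 0 := by rw [hz_def]; simp
      have hzval : ∀ j' : Fin (m+1), z j'.castSucc =
          -(a' * (g * u₁) (Fin.last (m+1)) j'.castSucc) := by
        intro j'; rw [hz_def]; simp
      set w : Matrix (Fin (m+2)) (Fin (m+2)) R :=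
        1 + vecMulVec (Pi.single (Fin.last (m+1)) 1) z with hw_def
      have hw : IsLowerUniI I w := lower_rank1 z hzI hzl
      have hg₂entry : ∀ i j, (g * u₁ * w) i j =
          (g * u₁) i j + (g * u₁) i (Fin.last (m+1)) * z j := by
        intro i j
        rw [hw_def, mul_add, mul_one, mul_vmv, Matrix.add_apply, vecMulVec_apply,
          mulVec_single]
      have hg₂row0 : ∀ j' : Fin (m+1), (g * u₁ * w) (Fin.last (m+1)) j'.castSucc = 0 := by
        intro j'
        rw [hg₂entry, hzval, hg₁LL]
        linear_combination (-((g * u₁) (Fin.last (m+1)) j'.castSucc)) * ha'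
      have hg₂LL : (g * u₁ * w) (Fin.last (m+1)) (Fin.last (m+1)) = aa := by
        rw [hg₂entry, hzl, mul_zero, add_zero, hg₁LL]
      have hg₂cong : Cong I (g * u₁ * w) := hg₁cong.mul (lowerCong hw)
      have hg₂det : (g * u₁ * w).det = 1 := by
        rw [Matrix.det_mul, hg₁det, lowerDet hw, one_mul]
      -- the principal block
      have haM : aa * ((g * u₁ * w).submatrix Fin.castSucc Fin.castSucc).det = 1 := by
        have h := det_lastRow (g * u₁ * w) hg₂row0
        rw [hg₂LL, hg₂det] at h
        exact h.symm
      have hM₀unit : IsUnit ((g * u₁ * w).submatrix Fin.castSucc Fin.castSucc).det :=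
        IsUnit.of_mul_eq_one aa (by rw [mul_comm]; exact haM)
      have hM₀cong : Cong I ((g * u₁ * w).submatrix Fin.castSucc Fin.castSucc) :=
        cong_submatrix hg₂cong
      -- the column-clearing vector y
      obtain ⟨y, hyI, hyl, hyup, hylast⟩ : ∃ y : Fin (m+2) → R, (∀ k, y k ∈ I) ∧
          y (Fin.last (m+1)) = 0 ∧
          (∀ i' : Fin (m+1), ((g * u₁ * w) *ᵥ y) i'.castSucc =
            -((g * u₁ * w) i'.castSucc (Fin.last (m+1)))) ∧
          ((g * u₁ * w) *ᵥ y) (Fin.last (m+1)) = 0 := by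
        set M₀ := (g * u₁ * w).submatrix Fin.castSucc Fin.castSucc with hM₀_def
        set c' : Fin (m+1) → R := fun i => (g * u₁ * w) i.castSucc (Fin.last (m+1))
          with hc'_def
        set y' : Fin (m+1) → R := -(M₀⁻¹ *ᵥ c') with hy'_def
        have hMy : M₀ *ᵥ y' = -c' := by
          rw [hy'_def, Matrix.mulVec_neg, Matrix.mulVec_mulVec,
            Matrix.mul_nonsing_inv _ hM₀unit, Matrix.one_mulVec]
        have hy'I : ∀ i, y' i ∈ I := by
          intro i
          rw [hy'_def]
          refine neg_mem (mulVec_memI _ (fun k => ?_) i)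
          rw [hc'_def]
          exact hg₂cong.offDiag (Fin.castSucc_lt_last k).ne
        refine ⟨fun k => Fin.lastCases 0 y' k, ?_, by simp, ?_, ?_⟩
        · intro k
          induction k using Fin.lastCases with
          | last => simp
          | cast k' => simp only [Fin.lastCases_castSucc]; exact hy'I k'
        · intro i'
          have hsum : ((g * u₁ * w) *ᵥ fun k => Fin.lastCases 0 y' k) i'.castSucc
              = ∑ k' : Fin (m+1), (g * u₁ * w) i'.castSucc k'.castSucc * y' k' := by
            show ((g * u₁ * w) i'.castSucc) ⬝ᵥ _ = _
            rw [dotProduct, Fin.sum_univ_castSucc]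
            simp only [Fin.lastCases_castSucc, Fin.lastCases_last, mul_zero, add_zero]
          rw [hsum]
          have h := congrFun hMy i'
          rw [Matrix.mulVec, Pi.neg_apply] at h
          calc ∑ k' : Fin (m+1), (g * u₁ * w) i'.castSucc k'.castSucc * y' k'
              = (M₀ i') ⬝ᵥ y' := by
                rw [dotProduct]
                exact Finset.sum_congr rfl (fun k _ => by rw [hM₀_def]; rfl)
            _ = -(c' i') := h
            _ = -((g * u₁ * w) i'.castSucc (Fin.last (m+1))) := by rw [hc'_def]
        · show ((g * u₁ * w) (Fin.last (m+1))) ⬝ᵥ _ = 0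
          rw [dotProduct, Fin.sum_univ_castSucc]
          simp only [Fin.lastCases_castSucc, Fin.lastCases_last, mul_zero, add_zero]
          exact Finset.sum_eq_zero (fun k _ => by rw [hg₂row0 k, zero_mul])
      set u₂ : Matrix (Fin (m+2)) (Fin (m+2)) R :=
        1 + vecMulVec y (Pi.single (Fin.last (m+1)) 1) with hu₂_def
      have hu₂ : IsUpperUniI I u₂ := upper_rank1 y hyI hyl
      have hg₃entry : ∀ i j, (g * u₁ * w * u₂) i j = (g * u₁ * w) i j +
          ((g * u₁ * w) *ᵥ y) i * (Pi.single (Fin.last (m+1)) (1:R) : Fin (m+2) → R) j := by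
        intro i j
        rw [hu₂_def, mul_add, mul_one, mul_vmv, Matrix.add_apply, vecMulVec_apply]
      -- diagonal vectors
      set d₂ : Fin (m+2) → R := fun j => Fin.lastCases aa (fun _ => 1) j with hd₂_def
      set d₁ : Fin (m+1) → R := fun j => Fin.lastCases aa (fun _ => 1) j with hd₁_def
      set d₀ : Fin (m+2) → R :=
        fun j => Fin.lastCases aa (fun j' => Fin.lastCases a' (fun _ => 1) j') j with hd₀_def
      set d₀inv : Fin (m+2) → R :=
        fun j => Fin.lastCases a' (fun j' => Fin.lastCases aa (fun _ => 1) j') j with hd₀inv_def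
      have hd₀ : ∀ j, d₀ j * d₀inv j = 1 := by
        intro j
        rw [hd₀_def, hd₀inv_def]
        induction j using Fin.lastCases with
        | last => simpa using ha'
        | cast j' =>
          induction j' using Fin.lastCases with
          | last => simp only [Fin.lastCases_castSucc, Fin.lastCases_last]
                    rw [mul_comm]; exact ha'
          | cast j'' => simp
      have ha'sub : a' - 1 ∈ I := by
        have h5 : a' - 1 = a' * (1 - aa) + (aa * a' - 1) := by ring
        rw [h5, ha', sub_self, add_zero]
        exact I.mul_mem_left _ (by simpa [neg_sub] using I.neg_mem hsub)
      have hd₀I : ∀ j, d₀ j - 1 ∈ I := by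
        intro j
        rw [hd₀_def]
        induction j using Fin.lastCases with
        | last => simpa using hsub
        | cast j' =>
          induction j' using Fin.lastCases with
          | last => simpa using ha'sub
          | cast j'' => simp
      -- the key identity
      have key₃ : g * u₁ * w * u₂ =
          ext1 ((g * u₁ * w).submatrix Fin.castSucc Fin.castSucc) * Matrix.diagonal d₂ := by
        ext i j
        rw [Matrix.mul_diagonal, hg₃entry]
        induction j using Fin.lastCases with
        | last =>
          rw [Pi.single_eq_same, mul_one]
          rw [hd₂_def]
          simp only [Fin.lastCases_last]
          induction i using Fin.lastCases with
          | last => rw [hylast, add_zero, hg₂LL, ext1_ll, one_mul]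
          | cast i' =>
            rw [hyup i', ext1_cl, zero_mul]
            exact add_neg_cancel _
        | cast j' =>
          rw [Pi.single_eq_of_ne (Fin.castSucc_lt_last j').ne, mul_zero, add_zero]
          rw [hd₂_def]
          simp only [Fin.lastCases_castSucc]
          rw [mul_one]
          induction i using Fin.lastCases with
          | last => rw [hg₂row0 j', ext1_lc]
          | cast i' => rw [ext1_cc]; rfl
      have hdiagrel : ext1 (Matrix.diagonal d₁) * Matrix.diagonal d₀ = Matrix.diagonal d₂ := by
        ext i j
        rw [Matrix.mul_diagonal]
        induction i using Fin.lastCases with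
        | last =>
          induction j using Fin.lastCases with
          | last =>
            rw [ext1_ll, one_mul, Matrix.diagonal_apply_eq, hd₀_def, hd₂_def]
            simp
          | cast j' =>
            rw [ext1_lc, zero_mul, Matrix.diagonal_apply_ne _ (Fin.castSucc_lt_last j').ne']
        | cast i' =>
          induction j using Fin.lastCases with
          | last =>
            rw [ext1_cl, zero_mul, Matrix.diagonal_apply_ne _ (Fin.castSucc_lt_last i').ne]
          | cast j' =>
            rw [ext1_cc]
            by_cases hij : i' = j'
            · subst hij
              rw [Matrix.diagonal_apply_eq, Matrix.diagonal_apply_eq, hd₁_def, hd₀_def,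
                hd₂_def]
              simp only [Fin.lastCases_castSucc]
              induction i' using Fin.lastCases with
              | last => simpa using ha'
              | cast i'' => simp
            · rw [Matrix.diagonal_apply_ne _ hij, zero_mul,
                Matrix.diagonal_apply_ne _ (fun h => hij (Fin.castSucc_injective _ h))]
      -- determinant and congruence of the block with rescaled last column
      have hd₁prod : (∏ j, d₁ j) = aa := by
        rw [Fin.prod_univ_castSucc, hd₁_def]
        simp
      have hM'det : (((g * u₁ * w).submatrix Fin.castSucc Fin.castSucc) *
          Matrix.diagonal d₁).det = 1 := by
        rw [Matrix.det_mul, Matrix.det_diagonal, hd₁prod, mul_comm]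
        exact haM
      have hM'cong : Cong I (((g * u₁ * w).submatrix Fin.castSucc Fin.castSucc) *
          Matrix.diagonal d₁) := by
        refine hM₀cong.mul (cong_of_conds (fun i => ?_) (fun i j hij => ?_))
        · rw [Matrix.diagonal_apply_eq, hd₁_def]
          induction i using Fin.lastCases with
          | last => simpa using hsub
          | cast i' => simp
        · rw [Matrix.diagonal_apply_ne _ hij]; exact I.zero_mem
      obtain ⟨h', u', v', u'', hEq', hh'0, hh'I, hu', hv', hu''⟩ :=
        ih (((g * u₁ * w).submatrix Fin.castSucc Fin.castSucc) * Matrix.diagonal d₁)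
          hM'det hM'cong
      -- assemble
      have hkey : g * u₁ * w * u₂ =
          ext1 (((g * u₁ * w).submatrix Fin.castSucc Fin.castSucc) * Matrix.diagonal d₁) *
            Matrix.diagonal d₀ := by
        rw [← ext1_mul,
          mul_assoc (ext1 ((g * u₁ * w).submatrix Fin.castSucc Fin.castSucc)) _ _,
          hdiagrel, key₃]
      have hu₁inv : u₁ * (1 - vecMulVec x (Pi.single (Fin.last (m+1)) 1)) = 1 := by
        rw [hu₁_def]
        exact rank1_inv _ _ (by rw [single_dot, hxl])
      have hu₂inv : u₂ * (1 - vecMulVec y (Pi.single (Fin.last (m+1)) 1)) = 1 := by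
        rw [hu₂_def]
        exact rank1_inv _ _ (by rw [single_dot, hyl])
      have hwinv : w * (1 - vecMulVec (Pi.single (Fin.last (m+1)) 1) z) = 1 := by
        rw [hw_def]
        exact rank1_inv _ _ (by rw [dot_single, hzl])
      have hgexpr : g =
          ext1 (((g * u₁ * w).submatrix Fin.castSucc Fin.castSucc) * Matrix.diagonal d₁) *
            Matrix.diagonal d₀ *
            (1 - vecMulVec y (Pi.single (Fin.last (m+1)) 1)) *
            (1 - vecMulVec (Pi.single (Fin.last (m+1)) 1) z) *
            (1 - vecMulVec x (Pi.single (Fin.last (m+1)) 1)) := by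
        have h6 : g * u₁ * w * u₂ *
            (1 - vecMulVec y (Pi.single (Fin.last (m+1)) 1)) *
            (1 - vecMulVec (Pi.single (Fin.last (m+1)) 1) z) *
            (1 - vecMulVec x (Pi.single (Fin.last (m+1)) 1)) = g := by
          rw [mul_assoc (g * u₁ * w) u₂, hu₂inv, mul_one]
          rw [mul_assoc (g * u₁) w, hwinv, mul_one]
          rw [mul_assoc g u₁, hu₁inv, mul_one]
        calc g = g * u₁ * w * u₂ *
            (1 - vecMulVec y (Pi.single (Fin.last (m+1)) 1)) *
            (1 - vecMulVec (Pi.single (Fin.last (m+1)) 1) z) *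
            (1 - vecMulVec x (Pi.single (Fin.last (m+1)) 1)) := h6.symm
          _ = _ := by rw [hkey]
      have hsplit : ext1 (((g * u₁ * w).submatrix Fin.castSucc Fin.castSucc) *
          Matrix.diagonal d₁) = ext1 h' * ext1 u' * ext1 v' * ext1 u'' := by
        rw [hEq', ← ext1_mul, ← ext1_mul, ← ext1_mul]
      have hswapD : ∀ X : Matrix (Fin (m+2)) (Fin (m+2)) R, X * Matrix.diagonal d₀ =
          Matrix.diagonal d₀ * Matrix.of (fun i j => d₀inv i * X i j * d₀ j) :=
        fun X => diag_conj d₀ d₀inv hd₀ X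
      have hrearr : ext1 h' * ext1 u' * ext1 v' * ext1 u'' * Matrix.diagonal d₀ =
          (ext1 h' * Matrix.diagonal d₀) *
            Matrix.of (fun i j => d₀inv i * (ext1 u') i j * d₀ j) *
            Matrix.of (fun i j => d₀inv i * (ext1 v') i j * d₀ j) *
            Matrix.of (fun i j => d₀inv i * (ext1 u'') i j * d₀ j) := by
        rw [mul_assoc (ext1 h' * ext1 u' * ext1 v') (ext1 u'') (Matrix.diagonal d₀),
          hswapD (ext1 u''), ← mul_assoc]
        rw [mul_assoc (ext1 h' * ext1 u') (ext1 v') (Matrix.diagonal d₀),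
          hswapD (ext1 v'), ← mul_assoc]
        rw [mul_assoc (ext1 h') (ext1 u') (Matrix.diagonal d₀),
          hswapD (ext1 u'), ← mul_assoc]
      -- predicates of the conjugates
      have hA : IsUpperUniI I (Matrix.of (fun i j => d₀inv i * (ext1 u') i j * d₀ j)) :=
        conj_upper hd₀ (ext1_upper hu')
      have hB : IsLowerUniI I (Matrix.of (fun i j => d₀inv i * (ext1 v') i j * d₀ j)) :=
        conj_lower hd₀ (ext1_lower hv')
      have hCu : IsUpperUniI I (Matrix.of (fun i j => d₀inv i * (ext1 u'') i j * d₀ j)) :=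
        conj_upper hd₀ (ext1_upper hu'')
      have hBrow := conj_rowE hd₀ (ext1_lastRowE v')
      have hCrow := conj_rowE hd₀ (ext1_lastRowE u'')
      have hCcol := conj_colE hd₀ (ext1_lastColE u'')
      -- swap the upper rank-one factor through C and B
      have step1 : Matrix.of (fun i j => d₀inv i * (ext1 u'') i j * d₀ j) *
          (1 - vecMulVec y (Pi.single (Fin.last (m+1)) 1)) =
          (1 + vecMulVec ((Matrix.of (fun i j => d₀inv i * (ext1 u'') i j * d₀ j)) *ᵥ (-y))
            (Pi.single (Fin.last (m+1)) 1)) *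
          Matrix.of (fun i j => d₀inv i * (ext1 u'') i j * d₀ j) := by
        rw [one_sub_vmv]
        exact swapUpper _ hCrow (-y)
      have step2 : Matrix.of (fun i j => d₀inv i * (ext1 v') i j * d₀ j) *
          (1 + vecMulVec ((Matrix.of (fun i j => d₀inv i * (ext1 u'') i j * d₀ j)) *ᵥ (-y))
            (Pi.single (Fin.last (m+1)) 1)) =
          (1 + vecMulVec ((Matrix.of (fun i j => d₀inv i * (ext1 v') i j * d₀ j)) *ᵥ
            ((Matrix.of (fun i j => d₀inv i * (ext1 u'') i j * d₀ j)) *ᵥ (-y)))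
            (Pi.single (Fin.last (m+1)) 1)) *
          Matrix.of (fun i j => d₀inv i * (ext1 v') i j * d₀ j) :=
        swapUpper _ hBrow _
      -- swap the lower rank-one factor through C
      have hCdet : IsUnit (Matrix.of (fun i j => d₀inv i * (ext1 u'') i j * d₀ j)).det := by
        rw [conj_det d₀ d₀inv hd₀, det_ext1, upperDet hu'']
        exact isUnit_one
      have hz''C : ((-z) ᵥ* (Matrix.of (fun i j => d₀inv i * (ext1 u'') i j * d₀ j))⁻¹) ᵥ*
          (Matrix.of (fun i j => d₀inv i * (ext1 u'') i j * d₀ j)) = -z := by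
        rw [Matrix.vecMul_vecMul, Matrix.nonsing_inv_mul _ hCdet, Matrix.vecMul_one]
      have step3 : Matrix.of (fun i j => d₀inv i * (ext1 u'') i j * d₀ j) *
          (1 - vecMulVec (Pi.single (Fin.last (m+1)) 1) z) =
          (1 + vecMulVec (Pi.single (Fin.last (m+1)) 1)
            ((-z) ᵥ* (Matrix.of (fun i j => d₀inv i * (ext1 u'') i j * d₀ j))⁻¹)) *
          Matrix.of (fun i j => d₀inv i * (ext1 u'') i j * d₀ j) := by
        rw [one_sub_vmv_right]
        exact swapLower _ hCcol _ _ hz''C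
      -- memberships for the new rank-one vectors
      have hyaI : ∀ i, ((Matrix.of (fun i j => d₀inv i * (ext1 u'') i j * d₀ j)) *ᵥ (-y)) i ∈ I :=
        mulVec_memI _ (fun i => I.neg_mem (hyI i))
      have hyaL : ((Matrix.of (fun i j => d₀inv i * (ext1 u'') i j * d₀ j)) *ᵥ (-y))
          (Fin.last (m+1)) = 0 := by
        rw [rowE_mulVec hCrow]
        simp [hyl]
      have hybI : ∀ i, ((Matrix.of (fun i j => d₀inv i * (ext1 v') i j * d₀ j)) *ᵥ
          ((Matrix.of (fun i j => d₀inv i * (ext1 u'') i j * d₀ j)) *ᵥ (-y))) i ∈ I :=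
        mulVec_memI _ hyaI
      have hybL : ((Matrix.of (fun i j => d₀inv i * (ext1 v') i j * d₀ j)) *ᵥ
          ((Matrix.of (fun i j => d₀inv i * (ext1 u'') i j * d₀ j)) *ᵥ (-y)))
          (Fin.last (m+1)) = 0 := by
        rw [rowE_mulVec hBrow, hyaL]
      have hz''I : ∀ j, ((-z) ᵥ* (Matrix.of
          (fun i j => d₀inv i * (ext1 u'') i j * d₀ j))⁻¹) j ∈ I :=
        vecMul_memI _ (fun i => I.neg_mem (hzI i))
      have hz''L : ((-z) ᵥ* (Matrix.of
          (fun i j => d₀inv i * (ext1 u'') i j * d₀ j))⁻¹) (Fin.last (m+1)) = 0 := by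
        have hCinvcol : (Matrix.of (fun i j => d₀inv i * (ext1 u'') i j * d₀ j))⁻¹ *ᵥ
            (Pi.single (Fin.last (m+1)) (1:R)) = Pi.single (Fin.last (m+1)) 1 := by
          have h8 := colE_mulVec_single hCcol
          calc (Matrix.of (fun i j => d₀inv i * (ext1 u'') i j * d₀ j))⁻¹ *ᵥ
              (Pi.single (Fin.last (m+1)) (1:R))
              = (Matrix.of (fun i j => d₀inv i * (ext1 u'') i j * d₀ j))⁻¹ *ᵥ
                ((Matrix.of (fun i j => d₀inv i * (ext1 u'') i j * d₀ j)) *ᵥ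
                  (Pi.single (Fin.last (m+1)) (1:R))) := by rw [h8]
            _ = ((Matrix.of (fun i j => d₀inv i * (ext1 u'') i j * d₀ j))⁻¹ *
                (Matrix.of (fun i j => d₀inv i * (ext1 u'') i j * d₀ j))) *ᵥ
                  (Pi.single (Fin.last (m+1)) (1:R)) := by rw [Matrix.mulVec_mulVec]
            _ = Pi.single (Fin.last (m+1)) 1 := by
                rw [Matrix.nonsing_inv_mul _ hCdet, Matrix.one_mulVec]
        show (-z) ⬝ᵥ (fun k => (Matrix.of
          (fun i j => d₀inv i * (ext1 u'') i j * d₀ j))⁻¹ k (Fin.last (m+1))) = 0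
        have h7 : (fun k => (Matrix.of (fun i j => d₀inv i * (ext1 u'') i j * d₀ j))⁻¹ k
            (Fin.last (m+1))) = (Pi.single (Fin.last (m+1)) (1:R) : Fin (m+2) → R) := by
          ext k
          rw [← mulVec_single ((Matrix.of (fun i j => d₀inv i * (ext1 u'') i j * d₀ j))⁻¹) k,
            hCinvcol]
        rw [h7, dot_single, Pi.neg_apply, hzl, neg_zero]
      -- final rearrangement
      refine ⟨ext1 h' * Matrix.diagonal d₀,
        Matrix.of (fun i j => d₀inv i * (ext1 u') i j * d₀ j) *
          (1 + vecMulVec ((Matrix.of (fun i j => d₀inv i * (ext1 v') i j * d₀ j)) *ᵥ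
            ((Matrix.of (fun i j => d₀inv i * (ext1 u'') i j * d₀ j)) *ᵥ (-y)))
            (Pi.single (Fin.last (m+1)) 1)),
        Matrix.of (fun i j => d₀inv i * (ext1 v') i j * d₀ j) *
          (1 + vecMulVec (Pi.single (Fin.last (m+1)) 1)
            ((-z) ᵥ* (Matrix.of (fun i j => d₀inv i * (ext1 u'') i j * d₀ j))⁻¹)),
        Matrix.of (fun i j => d₀inv i * (ext1 u'') i j * d₀ j) *
          (1 - vecMulVec x (Pi.single (Fin.last (m+1)) 1)),
        ?_, ?_, ?_, ?_, ?_, ?_⟩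
      · -- the product identity
        calc g = ext1 (((g * u₁ * w).submatrix Fin.castSucc Fin.castSucc) *
              Matrix.diagonal d₁) * Matrix.diagonal d₀ *
            (1 - vecMulVec y (Pi.single (Fin.last (m+1)) 1)) *
            (1 - vecMulVec (Pi.single (Fin.last (m+1)) 1) z) *
            (1 - vecMulVec x (Pi.single (Fin.last (m+1)) 1)) := hgexpr
          _ = ext1 h' * ext1 u' * ext1 v' * ext1 u'' * Matrix.diagonal d₀ *
            (1 - vecMulVec y (Pi.single (Fin.last (m+1)) 1)) *
            (1 - vecMulVec (Pi.single (Fin.last (m+1)) 1) z) *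
            (1 - vecMulVec x (Pi.single (Fin.last (m+1)) 1)) := by rw [hsplit]
          _ = (ext1 h' * Matrix.diagonal d₀) *
            Matrix.of (fun i j => d₀inv i * (ext1 u') i j * d₀ j) *
            Matrix.of (fun i j => d₀inv i * (ext1 v') i j * d₀ j) *
            Matrix.of (fun i j => d₀inv i * (ext1 u'') i j * d₀ j) *
            (1 - vecMulVec y (Pi.single (Fin.last (m+1)) 1)) *
            (1 - vecMulVec (Pi.single (Fin.last (m+1)) 1) z) *
            (1 - vecMulVec x (Pi.single (Fin.last (m+1)) 1)) := by rw [hrearr]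
          _ = (ext1 h' * Matrix.diagonal d₀) *
            (Matrix.of (fun i j => d₀inv i * (ext1 u') i j * d₀ j) *
             (1 + vecMulVec ((Matrix.of (fun i j => d₀inv i * (ext1 v') i j * d₀ j)) *ᵥ
              ((Matrix.of (fun i j => d₀inv i * (ext1 u'') i j * d₀ j)) *ᵥ (-y)))
              (Pi.single (Fin.last (m+1)) 1))) *
            (Matrix.of (fun i j => d₀inv i * (ext1 v') i j * d₀ j) *
             (1 + vecMulVec (Pi.single (Fin.last (m+1)) 1)
              ((-z) ᵥ* (Matrix.of (fun i j => d₀inv i * (ext1 u'') i j * d₀ j))⁻¹))) *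
            (Matrix.of (fun i j => d₀inv i * (ext1 u'') i j * d₀ j) *
             (1 - vecMulVec x (Pi.single (Fin.last (m+1)) 1))) := by
              rw [mul_assoc ((ext1 h' * Matrix.diagonal d₀) * (Matrix.of (fun i j => d₀inv i * (ext1 u') i j * d₀ j)) * (Matrix.of (fun i j => d₀inv i * (ext1 v') i j * d₀ j))) (Matrix.of (fun i j => d₀inv i * (ext1 u'') i j * d₀ j)) (1 - vecMulVec y (Pi.single (Fin.last (m+1)) 1))]
              rw [step1]
              rw [← mul_assoc ((ext1 h' * Matrix.diagonal d₀) * (Matrix.of (fun i j => d₀inv i * (ext1 u') i j * d₀ j)) * (Matrix.of (fun i j => d₀inv i * (ext1 v') i j * d₀ j))) (1 + vecMulVec ((Matrix.of (fun i j => d₀inv i * (ext1 u'') i j * d₀ j)) *ᵥ (-y)) (Pi.single (Fin.last (m+1)) 1)) (Matrix.of (fun i j => d₀inv i * (ext1 u'') i j * d₀ j))]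
              rw [mul_assoc ((ext1 h' * Matrix.diagonal d₀) * (Matrix.of (fun i j => d₀inv i * (ext1 u') i j * d₀ j))) (Matrix.of (fun i j => d₀inv i * (ext1 v') i j * d₀ j)) (1 + vecMulVec ((Matrix.of (fun i j => d₀inv i * (ext1 u'') i j * d₀ j)) *ᵥ (-y)) (Pi.single (Fin.last (m+1)) 1))]
              rw [step2]
              rw [← mul_assoc ((ext1 h' * Matrix.diagonal d₀) * (Matrix.of (fun i j => d₀inv i * (ext1 u') i j * d₀ j))) (1 + vecMulVec ((Matrix.of (fun i j => d₀inv i * (ext1 v') i j * d₀ j)) *ᵥ ((Matrix.of (fun i j => d₀inv i * (ext1 u'') i j * d₀ j)) *ᵥ (-y))) (Pi.single (Fin.last (m+1)) 1)) (Matrix.of (fun i j => d₀inv i * (ext1 v') i j * d₀ j))]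
              rw [mul_assoc (ext1 h' * Matrix.diagonal d₀) (Matrix.of (fun i j => d₀inv i * (ext1 u') i j * d₀ j)) (1 + vecMulVec ((Matrix.of (fun i j => d₀inv i * (ext1 v') i j * d₀ j)) *ᵥ ((Matrix.of (fun i j => d₀inv i * (ext1 u'') i j * d₀ j)) *ᵥ (-y))) (Pi.single (Fin.last (m+1)) 1))]
              rw [mul_assoc ((ext1 h' * Matrix.diagonal d₀) * ((Matrix.of (fun i j => d₀inv i * (ext1 u') i j * d₀ j)) * (1 + vecMulVec ((Matrix.of (fun i j => d₀inv i * (ext1 v') i j * d₀ j)) *ᵥ ((Matrix.of (fun i j => d₀inv i * (ext1 u'') i j * d₀ j)) *ᵥ (-y))) (Pi.single (Fin.last (m+1)) 1))) * (Matrix.of (fun i j => d₀inv i * (ext1 v') i j * d₀ j))) (Matrix.of (fun i j => d₀inv i * (ext1 u'') i j * d₀ j)) (1 - vecMulVec (Pi.single (Fin.last (m+1)) 1) z)]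
              rw [step3]
              rw [← mul_assoc ((ext1 h' * Matrix.diagonal d₀) * ((Matrix.of (fun i j => d₀inv i * (ext1 u') i j * d₀ j)) * (1 + vecMulVec ((Matrix.of (fun i j => d₀inv i * (ext1 v') i j * d₀ j)) *ᵥ ((Matrix.of (fun i j => d₀inv i * (ext1 u'') i j * d₀ j)) *ᵥ (-y))) (Pi.single (Fin.last (m+1)) 1))) * (Matrix.of (fun i j => d₀inv i * (ext1 v') i j * d₀ j))) (1 + vecMulVec (Pi.single (Fin.last (m+1)) 1) ((-z) ᵥ* (Matrix.of (fun i j => d₀inv i * (ext1 u'') i j * d₀ j))⁻¹)) (Matrix.of (fun i j => d₀inv i * (ext1 u'') i j * d₀ j))]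
              rw [mul_assoc ((ext1 h' * Matrix.diagonal d₀) * ((Matrix.of (fun i j => d₀inv i * (ext1 u') i j * d₀ j)) * (1 + vecMulVec ((Matrix.of (fun i j => d₀inv i * (ext1 v') i j * d₀ j)) *ᵥ ((Matrix.of (fun i j => d₀inv i * (ext1 u'') i j * d₀ j)) *ᵥ (-y))) (Pi.single (Fin.last (m+1)) 1)))) (Matrix.of (fun i j => d₀inv i * (ext1 v') i j * d₀ j)) (1 + vecMulVec (Pi.single (Fin.last (m+1)) 1) ((-z) ᵥ* (Matrix.of (fun i j => d₀inv i * (ext1 u'') i j * d₀ j))⁻¹))]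
              rw [mul_assoc ((ext1 h' * Matrix.diagonal d₀) * ((Matrix.of (fun i j => d₀inv i * (ext1 u') i j * d₀ j)) * (1 + vecMulVec ((Matrix.of (fun i j => d₀inv i * (ext1 v') i j * d₀ j)) *ᵥ ((Matrix.of (fun i j => d₀inv i * (ext1 u'') i j * d₀ j)) *ᵥ (-y))) (Pi.single (Fin.last (m+1)) 1))) * ((Matrix.of (fun i j => d₀inv i * (ext1 v') i j * d₀ j)) * (1 + vecMulVec (Pi.single (Fin.last (m+1)) 1) ((-z) ᵥ* (Matrix.of (fun i j => d₀inv i * (ext1 u'') i j * d₀ j))⁻¹)))) (Matrix.of (fun i j => d₀inv i * (ext1 u'') i j * d₀ j)) (1 - vecMulVec x (Pi.single (Fin.last (m+1)) 1))]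
      · -- h diagonal off-diagonal zero
        intro i j hij
        rw [Matrix.mul_diagonal, (ext1_diag_offdiag hh'0 hh'I).1 i j hij, zero_mul]
      · -- h diagonal entries in 1 + I
        intro i
        rw [Matrix.mul_diagonal]
        exact mul_sub_one_mem ((ext1_diag_offdiag hh'0 hh'I).2 i) (hd₀I i)
      · exact upperMul hA (upper_rank1 _ hybI hybL)
      · exact lowerMul hB (lower_rank1 _ hz''I hz''L)
      · refine upperMul hCu ?_
        rw [one_sub_vmv]
        exact upper_rank1 (-x) (fun i => I.neg_mem (hxI i)) (by simp [hxl])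

end RGauss

/-- Relative Gauss decomposition for `E(n,R,I)` under `sr(I) = 1`. -/
theorem relative_gauss_SLn {R : Type*} [CommRing R] (I : Ideal R) (n : ℕ) (hn : 2 ≤ n)
    (hSR : SRCond 1 I) (g : Matrix.SpecialLinearGroup (Fin n) R) (hg : g ∈ relElemGroup n I) :
    ∃ h u₁ v u₂ : Matrix.SpecialLinearGroup (Fin n) R,
      g = h * u₁ * v * u₂ ∧
      (∀ i j : Fin n, i ≠ j → (h : Matrix (Fin n) (Fin n) R) i j = 0) ∧
      (∀ i : Fin n, (h : Matrix (Fin n) (Fin n) R) i i - 1 ∈ I) ∧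
      IsUpperUniI I (u₁ : Matrix (Fin n) (Fin n) R) ∧
      IsLowerUniI I (v : Matrix (Fin n) (Fin n) R) ∧
      IsUpperUniI I (u₂ : Matrix (Fin n) (Fin n) R) := by
  classical
  have hle : relElemGroup n I ≤
      (Matrix.SpecialLinearGroup.map (n := Fin n) (Ideal.Quotient.mk I)).ker := by
    rw [relElemGroup]
    refine (Subgroup.closure_le _).mpr ?_
    rintro g' ⟨e, he, i, j, hij, s, hs, rfl⟩
    rw [SetLike.mem_coe, MonoidHom.mem_ker]
    have ht : Matrix.SpecialLinearGroup.map (n := Fin n) (Ideal.Quotient.mk I)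
        (tSL i j hij s) = 1 := by
      apply Subtype.ext
      show ((tSL i j hij s : Matrix (Fin n) (Fin n) R)).map (Ideal.Quotient.mk I) = _
      have hs0 : Ideal.Quotient.mk I s = 0 := Ideal.Quotient.eq_zero_iff_mem.mpr hs
      ext i' j'
      show Ideal.Quotient.mk I (Matrix.transvection i j s i' j') = _
      rw [Matrix.transvection, Matrix.add_apply, map_add]
      simp [Matrix.single, Matrix.one_apply, apply_ite (Ideal.Quotient.mk I), hs0]
    rw [_root_.map_mul, _root_.map_mul, ht, mul_one, _root_.map_inv]
    simp
  have hker := hle hg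
  rw [MonoidHom.mem_ker] at hker
  have hmap : ((g : Matrix (Fin n) (Fin n) R)).map (Ideal.Quotient.mk I) =
      (1 : Matrix (Fin n) (Fin n) (R ⧸ I)) := by
    have h := Subtype.ext_iff.mp hker
    exact h
  have hcong : RGauss.Cong I ((g : Matrix (Fin n) (Fin n) R)) := by
    refine RGauss.cong_of_conds (fun i => ?_) (fun i j hij => ?_)
    · have h2 : Ideal.Quotient.mk I ((g : Matrix (Fin n) (Fin n) R) i i) =
          (1 : Matrix (Fin n) (Fin n) (R ⧸ I)) i i := by
        rw [← hmap]; rfl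
      rw [Matrix.one_apply_eq] at h2
      have h3 : Ideal.Quotient.mk I ((g : Matrix (Fin n) (Fin n) R) i i) =
          Ideal.Quotient.mk I 1 := by rw [h2, _root_.map_one]
      exact (Ideal.Quotient.eq).mp h3
    · have h2 : Ideal.Quotient.mk I ((g : Matrix (Fin n) (Fin n) R) i j) =
          (1 : Matrix (Fin n) (Fin n) (R ⧸ I)) i j := by
        rw [← hmap]; rfl
      rw [Matrix.one_apply_ne hij] at h2
      exact Ideal.Quotient.eq_zero_iff_mem.mp h2
  obtain ⟨h, u₁, v, u₂, hEq, hh0, hhI, hu₁, hv, hu₂⟩ :=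
    RGauss.stepB hSR n (g : Matrix (Fin n) (Fin n) R) g.2 hcong
  have hdu₁ : u₁.det = 1 := RGauss.upperDet hu₁
  have hdv : v.det = 1 := RGauss.lowerDet hv
  have hdu₂ : u₂.det = 1 := RGauss.upperDet hu₂
  have hdh : h.det = 1 := by
    have h4 := congrArg Matrix.det hEq
    rw [g.2, Matrix.det_mul, Matrix.det_mul, Matrix.det_mul, hdu₁, hdv, hdu₂,
      mul_one, mul_one, mul_one] at h4
    exact h4.symm
  refine ⟨⟨h, hdh⟩, ⟨u₁, hdu₁⟩, ⟨v, hdv⟩, ⟨u₂, hdu₂⟩, ?_, hh0, hhI, hu₁, hv, hu₂⟩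
  apply Subtype.ext
  exact hEq
end

section
/- Let R be a commutative ring, I an ideal of R, n ≥ 3, and suppose SR_{n−1}(I) holds. Then every g ∈ SL(n,R) with g ≡ 1ₙ (mod I) can be factored as g = u · v · z · w · x · h, where: u is upper unitriangular with all off-diagonal entries in I; v is lower unitriangular with all off-diagonal entries in I; z = t_{1n}(1)⁻¹ · t_{n1}(r) · t_{1n}(1) for some r ∈ I; w is lower unitriangular whose off-diagonal entries are zero except possibly in positions (i,1) with 2 ≤ i ≤ n−1, those entries lying in I; x is upper unitriangular whose off-diagonal entries are zero except possibly in positions (1,j) with 2 ≤ j ≤ n, those entries lying in I; and h has first row and first column equal to those of the identity, h ≡ 1ₙ (mod I), and the lower-right (n−1)×(n−1) block of h lies in SL(n−1,R). (Relative Bass–Kolster decomposition, case Φ = A_{n−1}.) -/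
open Matrix

/-- `g ≡ 1 (mod I)`, entrywise. -/
def ModI {R : Type*} [CommRing R] (I : Ideal R) {n : ℕ} (g : Matrix (Fin n) (Fin n) R) : Prop :=
  ∀ i j, g i j - (1 : Matrix (Fin n) (Fin n) R) i j ∈ I

namespace BKaux

variable {R : Type*} [CommRing R] {n : ℕ}

/-- `1 + p qᵀ`. -/
def E (p q : Fin n → R) : Matrix (Fin n) (Fin n) R := 1 + Matrix.vecMulVec p q

lemma E_apply (p q : Fin n → R) (i j : Fin n) :
    E p q i j = (if i = j then 1 else 0) + p i * q j := by
  simp [E, Matrix.one_apply, Matrix.vecMulVec_apply, Matrix.add_apply]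

lemma vecMul_vecMulVec (q p' q' : Fin n → R) :
    q ᵥ* Matrix.vecMulVec p' q' = (q ⬝ᵥ p') • q' := by
  funext j
  simp only [Matrix.vecMul, dotProduct, Matrix.vecMulVec_apply, Pi.smul_apply,
    smul_eq_mul, Finset.sum_mul]
  congr 1; funext k; ring

lemma E_mul_E (p q p' q' : Fin n → R) (h : q ⬝ᵥ p' = 0) :
    E p q * E p' q' = 1 + Matrix.vecMulVec p q + Matrix.vecMulVec p' q' := by
  have h2 : Matrix.vecMulVec p q * Matrix.vecMulVec p' q' = 0 := by
    ext i j
    simp [Matrix.mul_apply, Matrix.vecMulVec_apply]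
    have : ∑ k, p i * q k * (p' k * q' j) = p i * (q ⬝ᵥ p') * q' j := by
      rw [dotProduct, Finset.mul_sum, Finset.sum_mul]
      congr 1; funext k; ring
    rw [this, h]; ring
  simp only [E, Matrix.add_mul, Matrix.mul_add, Matrix.one_mul, Matrix.mul_one, h2]
  abel

lemma E_mul_E_neg (p q : Fin n → R) (h : q ⬝ᵥ p = 0) :
    E p q * E (-p) q = 1 := by
  rw [E_mul_E p q (-p) q (by simp [h])]
  ext i j
  simp [Matrix.vecMulVec_apply]

lemma E_neg_mul_E (p q : Fin n → R) (h : q ⬝ᵥ p = 0) :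
    E (-p) q * E p q = 1 := by
  have h' : q ⬝ᵥ (-p) = 0 := by rw [dotProduct_neg, h, neg_zero]
  have := E_mul_E_neg (-p) q h'
  rwa [neg_neg] at this

lemma E_negq_mul_E (p q : Fin n → R) (h : q ⬝ᵥ p = 0) :
    E p (-q) * E p q = 1 := by
  rw [E_mul_E p (-q) p q (by rw [neg_dotProduct, h, neg_zero])]
  ext i j
  simp [Matrix.vecMulVec_apply]

lemma det_E (p q : Fin n → R) (h : q ⬝ᵥ p = 0) : (E p q).det = 1 := by
  rw [E, Matrix.vecMulVec_eq Unit p q, Matrix.det_one_add_replicateCol_mul_replicateRow, h, add_zero]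

lemma E_mulVec (p q v : Fin n → R) : E p q *ᵥ v = v + (q ⬝ᵥ v) • p := by
  rw [E, Matrix.add_mulVec, Matrix.one_mulVec]
  congr 1
  funext i
  simp only [Matrix.mulVec, dotProduct, Matrix.vecMulVec_apply, Pi.smul_apply,
    smul_eq_mul, Finset.sum_mul]
  congr 1; funext k; ring

variable {I : Ideal R}

lemma ModI_mul {A B : Matrix (Fin n) (Fin n) R} (hA : ModI I A) (hB : ModI I B) :
    ModI I (A * B) := by
  intro i j
  have key : (A * B) i j - (1 : Matrix (Fin n) (Fin n) R) i j
      = (∑ k, A i k * (B k j - (1 : Matrix (Fin n) (Fin n) R) k j))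
        + (A i j - (1 : Matrix (Fin n) (Fin n) R) i j) := by
    simp only [Matrix.mul_apply, mul_sub, Finset.sum_sub_distrib, Matrix.one_apply, mul_ite,
      mul_one, mul_zero, Finset.sum_ite_eq', Finset.mem_univ, if_true]
    ring
  rw [key]
  exact Ideal.add_mem _ (Ideal.sum_mem _ fun k _ => Ideal.mul_mem_left _ _ (hB k j)) (hA i j)

lemma ModI_of_mul_eq_one {A B : Matrix (Fin n) (Fin n) R} (hA : ModI I A) (h : B * A = 1) :
    ModI I B := by
  intro i j
  have hBA : ∑ k, B i k * A k j = (if i = j then 1 else 0) := by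
    have := congrArg (fun M => M i j) h
    simpa [Matrix.mul_apply, Matrix.one_apply] using this
  have key : B i j - (1 : Matrix (Fin n) (Fin n) R) i j
      = ∑ k, B i k * ((1 : Matrix (Fin n) (Fin n) R) k j - A k j) := by
    simp only [mul_sub, Finset.sum_sub_distrib, Matrix.one_apply, mul_ite, mul_one, mul_zero,
      Finset.sum_ite_eq', Finset.mem_univ, if_true, hBA]
  rw [key]
  refine Ideal.sum_mem _ fun k _ => Ideal.mul_mem_left _ _ ?_
  have := hA k j
  rw [show (1 : Matrix (Fin n) (Fin n) R) k j - A k j = -(A k j - (1 : Matrix (Fin n) (Fin n) R) k j) by ring]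
  exact neg_mem this

lemma ModI_E {p q : Fin n → R} (hpq : ∀ i j, p i * q j ∈ I) : ModI I (E p q) := by
  intro i j
  rw [E_apply]
  simpa [Matrix.one_apply] using hpq i j

lemma tSL_inv {i j : Fin n} (hij : i ≠ j) (ξ : R) :
    (tSL i j hij ξ)⁻¹ = tSL i j hij (-ξ) := by
  apply inv_eq_of_mul_eq_one_right
  apply Subtype.ext
  show Matrix.transvection i j ξ * Matrix.transvection i j (-ξ) = 1
  rw [Matrix.transvection_mul_transvection_same _ _ hij, add_neg_cancel, Matrix.transvection_zero]

lemma trans_prod {L o : Fin n} (hL : L ≠ o) (r : R) :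
    Matrix.transvection o L (-1) * Matrix.transvection L o r * Matrix.transvection o L 1 =
      E (r • (Pi.single L 1 - Pi.single o 1)) (Pi.single o 1 + Pi.single L 1) := by
  have expand : ∀ A B C : Matrix (Fin n) (Fin n) R, (1 + A) * (1 + B) * (1 + C)
      = 1 + A + B + C + A * B + A * C + B * C + A * B * C := by
    intro A B C; noncomm_ring
  rw [Matrix.transvection, Matrix.transvection, Matrix.transvection, expand,
    Matrix.single_mul_single_same, Matrix.single_mul_single_of_ne (-1 : R) o L o hL (1 : R),
    Matrix.single_mul_single_same, Matrix.single_mul_single_same]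
  have hstd : ∀ (a b i j : Fin n) (c : R),
      Matrix.single i j c a b = if i = a ∧ j = b then c else 0 := fun _ _ _ _ _ => rfl
  clear expand
  ext a b
  have hoL : o ≠ L := hL.symm
  simp only [Matrix.add_apply, Matrix.zero_apply, Matrix.one_apply, E_apply, hstd,
    Pi.smul_apply, Pi.sub_apply, Pi.add_apply, Pi.single_apply, smul_eq_mul]
  clear hstd
  by_cases ha0 : a = o <;> by_cases haL : a = L <;> by_cases hb0 : b = o <;> by_cases hbL : b = L
  all_goals try simp only [ha0, haL, hb0, hbL, hL, hoL, Ne.symm hL, Ne.symm hoL, if_true,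
    if_false, and_true, true_and, and_false, false_and, eq_self_iff_true, ite_true, ite_false,
    not_false_iff, ne_eq, if_neg, if_pos]
  all_goals try split_ifs
  all_goals try ring
  all_goals (exfalso; grind)

end BKaux

/-- Relative Bass–Kolster decomposition for `SL(n, R, I)`. -/
theorem relative_bass_kolster {R : Type*} [CommRing R] (I : Ideal R) (n : ℕ) (hn : 3 ≤ n)
    (hSR : SRCond (n - 1) I) (g : Matrix.SpecialLinearGroup (Fin n) R)
    (hg : ModI I (g : Matrix (Fin n) (Fin n) R)) :
    ∃ u v z w x h : Matrix.SpecialLinearGroup (Fin n) R, ∃ r ∈ I,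
      g = u * v * z * w * x * h ∧
      -- u is upper unitriangular with off-diagonal entries in I
      ((∀ i, (u : Matrix (Fin n) (Fin n) R) i i = 1) ∧
        (∀ i j : Fin n, j < i → (u : Matrix (Fin n) (Fin n) R) i j = 0) ∧
        (∀ i j : Fin n, i < j → (u : Matrix (Fin n) (Fin n) R) i j ∈ I)) ∧
      -- v is lower unitriangular with off-diagonal entries in I
      ((∀ i, (v : Matrix (Fin n) (Fin n) R) i i = 1) ∧
        (∀ i j : Fin n, i < j → (v : Matrix (Fin n) (Fin n) R) i j = 0) ∧
        (∀ i j : Fin n, j < i → (v : Matrix (Fin n) (Fin n) R) i j ∈ I)) ∧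
      -- z = t_{1n}(1)⁻¹ t_{n1}(r) t_{1n}(1)
      z = (tSL (⟨0, by omega⟩ : Fin n) ⟨n - 1, by omega⟩ (by simp; omega) 1)⁻¹ *
            tSL (⟨n - 1, by omega⟩ : Fin n) ⟨0, by omega⟩ (by simp; omega) r *
            tSL (⟨0, by omega⟩ : Fin n) ⟨n - 1, by omega⟩ (by simp; omega) 1 ∧
      -- w is lower unitriangular, zero off the diagonal except in positions (i,1),
      -- 2 ≤ i ≤ n-1, those entries lying in I
      ((∀ i, (w : Matrix (Fin n) (Fin n) R) i i = 1) ∧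
        (∀ i : Fin n, i ≠ ⟨0, by omega⟩ → i ≠ ⟨n - 1, by omega⟩ →
          (w : Matrix (Fin n) (Fin n) R) i ⟨0, by omega⟩ ∈ I) ∧
        (∀ i j : Fin n, i ≠ j → (j ≠ ⟨0, by omega⟩ ∨ i = ⟨n - 1, by omega⟩) →
          (w : Matrix (Fin n) (Fin n) R) i j = 0)) ∧
      -- x is upper unitriangular, zero off the diagonal except in the first row,
      -- those entries lying in I
      ((∀ i, (x : Matrix (Fin n) (Fin n) R) i i = 1) ∧
        (∀ j : Fin n, j ≠ ⟨0, by omega⟩ →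
          (x : Matrix (Fin n) (Fin n) R) (⟨0, by omega⟩ : Fin n) j ∈ I) ∧
        (∀ i j : Fin n, i ≠ j → i ≠ ⟨0, by omega⟩ →
          (x : Matrix (Fin n) (Fin n) R) i j = 0)) ∧
      -- h has first row and column of the identity, h ≡ 1 mod I, and its lower-right
      -- (n-1)×(n-1) block has determinant 1 (i.e. lies in SL(n-1,R))
      ((∀ j : Fin n, (h : Matrix (Fin n) (Fin n) R) (⟨0, by omega⟩ : Fin n) j =
          (1 : Matrix (Fin n) (Fin n) R) (⟨0, by omega⟩ : Fin n) j) ∧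
        (∀ i : Fin n, (h : Matrix (Fin n) (Fin n) R) i ⟨0, by omega⟩ =
          (1 : Matrix (Fin n) (Fin n) R) i ⟨0, by omega⟩) ∧
        ModI I (h : Matrix (Fin n) (Fin n) R) ∧
        ((h : Matrix (Fin n) (Fin n) R).submatrix
          (fun i : Fin (n - 1) => (⟨(i : ℕ) + 1, by have := i.isLt; omega⟩ : Fin n))
          (fun j : Fin (n - 1) => (⟨(j : ℕ) + 1, by have := j.isLt; omega⟩ : Fin n))).det = 1) := by
  classical
  obtain ⟨m, rfl⟩ : ∃ m, n = m + 1 := ⟨n - 1, by omega⟩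
  have hm : 2 ≤ m := by omega
  -- indices
  set oo : Fin (m + 1) := ⟨0, by omega⟩ with hoo_def
  set LL : Fin (m + 1) := Fin.last m with hLL_def
  have hLLoo : LL ≠ oo := by
    simp only [hLL_def, hoo_def, Fin.ne_iff_vne, Fin.val_last]; omega
  have hooLL : oo ≠ LL := hLLoo.symm
  have hdetg : (g : Matrix (Fin (m+1)) (Fin (m+1)) R).det = 1 := g.2
  set G : Matrix (Fin (m+1)) (Fin (m+1)) R := (g : Matrix (Fin (m+1)) (Fin (m+1)) R) with hG_def
  -- first column
  set a : Fin (m + 1) → R := fun i => G i oo with ha_def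
  have ha : IsIUnimodular I a := by
    refine ⟨?_, ?_, ?_⟩
    · intro i hi
      have : i = oo := by simp [hoo_def, Fin.ext_iff, hi]
      subst this
      simpa [Matrix.one_apply] using hg oo oo
    · intro i hi
      have hio : i ≠ oo := by simp [hoo_def, Fin.ext_iff, hi]
      simpa [Matrix.one_apply, hio] using hg i oo
    · rw [Ideal.eq_top_iff_one]
      have hinv : G⁻¹ * G = 1 := Matrix.nonsing_inv_mul G (by rw [hdetg]; exact isUnit_one)
      have h1 : (1 : R) = ∑ k, G⁻¹ oo k * a k := by
        have := congrArg (fun M => M oo oo) hinv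
        simpa [Matrix.mul_apply, Matrix.one_apply, ha_def] using this.symm
      rw [h1]
      exact Ideal.sum_mem _ fun k _ =>
        Ideal.mul_mem_left _ _ (Ideal.subset_span ⟨k, rfl⟩)
  have hSR' : SRCond m I := hSR
  obtain ⟨b, hbI, hc⟩ := hSR' a ha
  set Cf : Fin m → R := fun i => a i.castSucc + a (Fin.last m) * b i with hCf_def
  have hc2 : IsIUnimodular I Cf := hc
  -- the vectors
  set e0 : Fin (m+1) → R := Pi.single oo 1 with he0_def
  set eL : Fin (m+1) → R := Pi.single LL 1 with heL_def
  set b' : Fin (m+1) → R := fun i => if h : (i : ℕ) < m then b ⟨i, h⟩ else 0 with hb'_def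
  have hb'I : ∀ i, b' i ∈ I := by
    intro i; rw [hb'_def]; dsimp only; split
    · exact hbI _
    · exact I.zero_mem
  have hb'L : b' LL = 0 := by rw [hb'_def]; simp [hLL_def]
  have hb'cast : ∀ j : Fin m, b' j.castSucc = b j := by
    intro j; rw [hb'_def]; dsimp only
    rw [dif_pos (by simpa using j.isLt)]
    simp only [Fin.coe_castSucc, Fin.eta]
  -- r
  set c0 : Fin m := ⟨0, by omega⟩ with hc0_def
  set r : R := 1 - Cf c0 with hr_def
  have hrI : r ∈ I := by
    have h1 : Cf c0 - 1 ∈ I := hc2.1 c0 rfl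
    have : r = -(Cf c0 - 1) := by rw [hr_def]; ring
    rw [this]; exact neg_mem h1
  -- mu
  have h1span : (1 : R) ∈ Ideal.span (Set.range Cf) := by rw [hc2.2.2]; trivial
  obtain ⟨μ, hμ⟩ := Ideal.mem_span_range_iff_exists_fun.1 h1span
  set lam : Fin (m+1) → R := fun j =>
    if h : (j : ℕ) < m then -((a (Fin.last m) - r) * μ ⟨j, h⟩) else 0 with hlam_def
  have haLI : a (Fin.last m) ∈ I := ha.2.1 (Fin.last m) (by simp [Fin.val_last]; omega)
  have hlamI : ∀ j, lam j ∈ I := by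
    intro j; rw [hlam_def]; dsimp only; split
    · exact neg_mem (Ideal.mul_mem_right _ _ (sub_mem haLI hrI))
    · exact I.zero_mem
  have hlamL : lam LL = 0 := by rw [hlam_def]; simp [hLL_def]
  have hlamcast : ∀ j : Fin m, lam j.castSucc = -((a (Fin.last m) - r) * μ j) := by
    intro j; rw [hlam_def]; dsimp only
    rw [dif_pos (by simpa using j.isLt)]
    simp only [Fin.coe_castSucc, Fin.eta]
  -- c'
  set c' : Fin (m+1) → R := fun i =>
    if h : 0 < (i : ℕ) ∧ (i : ℕ) < m then Cf ⟨i, h.2⟩ else 0 with hc'_def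
  have hc'I : ∀ i, c' i ∈ I := by
    intro i; rw [hc'_def]; dsimp only; split
    · next h => exact hc2.2.1 ⟨i, h.2⟩ (by simpa using h.1.ne')
    · exact I.zero_mem
  have hc'0 : c' oo = 0 := by rw [hc'_def]; simp [hoo_def]
  have hc'L : c' LL = 0 := by rw [hc'_def]; simp [hLL_def]
  -- z data
  set pz : Fin (m+1) → R := r • (eL - e0) with hpz_def
  set qz : Fin (m+1) → R := e0 + eL with hqz_def
  have hpzI : ∀ i, pz i ∈ I := by
    intro i; rw [hpz_def]
    exact Ideal.mul_mem_right _ _ hrI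
  -- dot product facts
  have hU0 : eL ⬝ᵥ b' = 0 := by
    rw [heL_def, single_dotProduct, hb'L, mul_zero]
  have hV0 : lam ⬝ᵥ eL = 0 := by
    rw [heL_def, dotProduct_single, hlamL, zero_mul]
  have hw0 : e0 ⬝ᵥ c' = 0 := by
    rw [he0_def, single_dotProduct, hc'0, mul_zero]
  have he0e0 : e0 ⬝ᵥ e0 = 1 := by
    simp [he0_def, single_dotProduct]
  have he0eL : e0 ⬝ᵥ eL = 0 := by
    simp [he0_def, heL_def, single_dotProduct, Pi.single_apply, hooLL]
  have heLe0 : eL ⬝ᵥ e0 = 0 := by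
    simp [he0_def, heL_def, single_dotProduct, Pi.single_apply, hLLoo]
  have heLeL : eL ⬝ᵥ eL = 1 := by
    simp [heL_def, single_dotProduct]
  have hz0 : qz ⬝ᵥ pz = 0 := by
    rw [hqz_def, hpz_def, add_dotProduct, dotProduct_smul, dotProduct_smul,
      dotProduct_sub, dotProduct_sub, he0e0, he0eL, heLe0, heLeL]
    simp
  -- matrices
  set Umat := BKaux.E b' eL with hUmat_def
  set Vmat := BKaux.E eL lam with hVmat_def
  set wmat := BKaux.E c' e0 with hwmat_def
  set wInv := BKaux.E (-c') e0 with hwInv_def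
  set zMat := BKaux.E pz qz with hzMat_def
  set zInv := BKaux.E (-pz) qz with hzInv_def
  set g2 := Vmat * (Umat * G) with hg2_def
  set g3 := wInv * (zInv * g2) with hg3_def
  -- column of g2
  have hGcol : G *ᵥ e0 = a := by
    funext i
    rw [he0_def]
    simp [Matrix.mulVec, dotProduct_single, ha_def]
  have hUa : Umat *ᵥ a = a + a LL • b' := by
    rw [hUmat_def, BKaux.E_mulVec]
    have h1 : eL ⬝ᵥ a = a LL := by rw [heL_def, single_dotProduct, one_mul]
    rw [h1]
  have hg2col : g2 *ᵥ e0 = (fun i => a i + a LL * b' i) + (r - a LL) • eL := by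
    rw [hg2_def, ← Matrix.mulVec_mulVec, ← Matrix.mulVec_mulVec, hGcol, hUa, hVmat_def,
      BKaux.E_mulVec]
    have h2 : lam ⬝ᵥ (a + a LL • b') = r - a LL := by
      rw [dotProduct]
      rw [Fin.sum_univ_castSucc]
      have hlast : lam (Fin.last m) = 0 := hlamL
      rw [hlast, zero_mul, add_zero]
      have heach : ∀ j : Fin m, lam j.castSucc * (a + a LL • b') j.castSucc
          = -((a (Fin.last m) - r)) * (μ j * Cf j) := by
        intro j
        rw [hlamcast]
        simp only [Pi.add_apply, Pi.smul_apply, smul_eq_mul, hb'cast, hCf_def]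
        have : a LL = a (Fin.last m) := rfl
        rw [this]; ring
      rw [Finset.sum_congr rfl fun j _ => heach j, ← Finset.mul_sum]
      have : ∑ j, μ j * Cf j = 1 := hμ
      rw [this]
      have : a LL = a (Fin.last m) := rfl
      rw [this]; ring
    rw [h2]
    funext i
    simp only [Pi.add_apply, Pi.smul_apply, smul_eq_mul]
    try ring
  -- column of z * w
  have hwcol : wmat *ᵥ e0 = e0 + c' := by
    rw [hwmat_def, BKaux.E_mulVec, he0e0, one_smul]
  have hzwcol : zMat *ᵥ (wmat *ᵥ e0) = g2 *ᵥ e0 := by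
    rw [hwcol, hzMat_def, BKaux.E_mulVec, hg2col]
    have hq : qz ⬝ᵥ (e0 + c') = 1 := by
      rw [hqz_def, add_dotProduct, dotProduct_add, dotProduct_add,
        he0e0, heLe0]
      have h1 : e0 ⬝ᵥ c' = 0 := by rw [he0_def, single_dotProduct, hc'0, mul_zero]
      have h2 : eL ⬝ᵥ c' = 0 := by rw [heL_def, single_dotProduct, hc'L, mul_zero]
      rw [h1, h2]; ring
    rw [hq, one_smul]
    funext i
    simp only [Pi.add_apply, hpz_def, Pi.smul_apply, Pi.sub_apply, smul_eq_mul]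
    by_cases hio : i = oo
    · subst hio
      have hsL : eL oo = 0 := by rw [heL_def]; exact Pi.single_eq_of_ne hooLL 1
      have hs0 : e0 oo = 1 := by rw [he0_def]; exact Pi.single_eq_same oo 1
      rw [hsL, hs0, hc'0]
      have hboo : b' oo = b c0 := by
        rw [hb'_def]; dsimp only
        have hoolt : (oo : ℕ) < m := by
          have : (oo : ℕ) = 0 := rfl
          omega
        rw [dif_pos hoolt]
      have haoo : a oo = Cf c0 - a (Fin.last m) * b c0 := by
        rw [hCf_def]; dsimp only
        have : c0.castSucc = oo := by apply Fin.ext; simp [hc0_def, hoo_def]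
        rw [this]; ring
      rw [hboo, haoo, hr_def]
      have : a LL = a (Fin.last m) := rfl
      rw [this]; ring
    by_cases hiL : i = LL
    · subst hiL
      have hsL : eL LL = 1 := by rw [heL_def]; exact Pi.single_eq_same LL 1
      have hs0 : e0 LL = 0 := by rw [he0_def]; exact Pi.single_eq_of_ne hLLoo 1
      rw [hsL, hs0, hc'L, hb'L]
      ring
    · have hsL : eL i = 0 := by rw [heL_def]; exact Pi.single_eq_of_ne hiL 1
      have hs0 : e0 i = 0 := by rw [he0_def]; exact Pi.single_eq_of_ne hio 1
      rw [hsL, hs0]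
      have hrange : 0 < (i : ℕ) ∧ (i : ℕ) < m := by
        constructor
        · have : (i : ℕ) ≠ 0 := fun h => hio (by apply Fin.ext; simpa [hoo_def] using h)
          omega
        · have : (i : ℕ) ≠ m := fun h => hiL (by apply Fin.ext; simpa [hLL_def] using h)
          have := i.isLt; omega
      have hci : c' i = Cf ⟨i, hrange.2⟩ := by
        rw [hc'_def]; dsimp only; rw [dif_pos hrange]
      have hbi : b' i = b ⟨i, hrange.2⟩ := by
        rw [hb'_def]; dsimp only; rw [dif_pos hrange.2]
      rw [hci, hbi, hCf_def]
      dsimp only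
      have : (⟨(i : ℕ), hrange.2⟩ : Fin m).castSucc = i := by apply Fin.ext; simp
      rw [this]
      have : a LL = a (Fin.last m) := rfl
      rw [this]; ring
  -- inverse pairs
  have hzz : zMat * zInv = 1 := BKaux.E_mul_E_neg pz qz hz0
  have hzz' : zInv * zMat = 1 := BKaux.E_neg_mul_E pz qz hz0
  have hww : wmat * wInv = 1 := BKaux.E_mul_E_neg c' e0 hw0
  have hww' : wInv * wmat = 1 := BKaux.E_neg_mul_E c' e0 hw0
  -- column of g3
  have hg3col : g3 *ᵥ e0 = e0 := by
    rw [hg3_def, ← Matrix.mulVec_mulVec, ← Matrix.mulVec_mulVec, ← hzwcol,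
      Matrix.mulVec_mulVec (wmat *ᵥ e0) zInv zMat, hzz', Matrix.one_mulVec,
      Matrix.mulVec_mulVec e0 wInv wmat, hww', Matrix.one_mulVec]
  have hg3col' : ∀ i, g3 i oo = if i = oo then 1 else 0 := by
    intro i
    have := congrFun hg3col i
    rw [he0_def] at this
    simpa [Matrix.mulVec, dotProduct_single, Pi.single_apply] using this
  -- determinants
  have hdetU : Umat.det = 1 := BKaux.det_E _ _ hU0
  have hdetV : Vmat.det = 1 := BKaux.det_E _ _ hV0
  have hdetw : wmat.det = 1 := BKaux.det_E _ _ hw0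
  have hdetwInv : wInv.det = 1 := BKaux.det_E _ _ (by rw [dotProduct_neg, hw0, neg_zero])
  have hdetz : zMat.det = 1 := BKaux.det_E _ _ hz0
  have hdetzInv : zInv.det = 1 := BKaux.det_E _ _ (by rw [dotProduct_neg, hz0, neg_zero])
  have hdet3 : g3.det = 1 := by
    rw [hg3_def, Matrix.det_mul, Matrix.det_mul, hg2_def, Matrix.det_mul, Matrix.det_mul,
      hdetwInv, hdetzInv, hdetV, hdetU, hdetg]
    ring
  have hdet3unit : IsUnit g3.det := by rw [hdet3]; exact isUnit_one
  have hg3inv : g3⁻¹ * g3 = 1 := Matrix.nonsing_inv_mul g3 hdet3unit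
  -- column of g3⁻¹
  have hg3invcol : ∀ i, g3⁻¹ i oo = if i = oo then 1 else 0 := by
    intro i
    have e1 : ∑ k, g3⁻¹ i k * g3 k oo = (1 : Matrix (Fin (m+1)) (Fin (m+1)) R) i oo := by
      have := congrArg (fun M => M i oo) hg3inv
      simpa [Matrix.mul_apply] using this
    have e2 : ∑ k, g3⁻¹ i k * g3 k oo = g3⁻¹ i oo := by
      rw [Finset.sum_eq_single oo]
      · rw [hg3col' oo, if_pos rfl, mul_one]
      · intro k _ hk; rw [hg3col' k, if_neg hk, mul_zero]
      · intro hk; exact absurd (Finset.mem_univ oo) hk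
    rw [← e2, e1, Matrix.one_apply]
  -- ModI facts
  have hmodU : ModI I Umat := BKaux.ModI_E fun i j => Ideal.mul_mem_right _ _ (hb'I i)
  have hmodV : ModI I Vmat := BKaux.ModI_E fun i j => Ideal.mul_mem_left _ _ (hlamI j)
  have hmodwInv : ModI I wInv := BKaux.ModI_E fun i j => by
    simp only [Pi.neg_apply]
    exact Ideal.mul_mem_right _ _ (neg_mem (hc'I i))
  have hmodzInv : ModI I zInv := BKaux.ModI_E fun i j => by
    simp only [Pi.neg_apply]
    exact Ideal.mul_mem_right _ _ (neg_mem (hpzI i))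
  have hmod2 : ModI I g2 := BKaux.ModI_mul hmodV (BKaux.ModI_mul hmodU hg)
  have hmod3 : ModI I g3 := BKaux.ModI_mul hmodwInv (BKaux.ModI_mul hmodzInv hmod2)
  have hmod3inv : ModI I g3⁻¹ := BKaux.ModI_of_mul_eq_one hmod3 hg3inv
  -- x data
  set s : Fin (m+1) → R := fun j => if j = oo then 0 else g3⁻¹ oo j with hs_def
  have hsI : ∀ j, s j ∈ I := by
    intro j; rw [hs_def]; dsimp only; split
    · exact I.zero_mem
    · next hj =>
      have := hmod3inv oo j
      rwa [Matrix.one_apply_ne (fun h => hj h.symm), sub_zero] at this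
  have hs0 : s oo = 0 := by rw [hs_def]; simp
  have hx0 : s ⬝ᵥ e0 = 0 := by rw [he0_def, dotProduct_single, hs0, zero_mul]
  set xMat := BKaux.E (-e0) s with hxMat_def
  set xInv := BKaux.E e0 s with hxInv_def
  have hxx : xMat * xInv = 1 := BKaux.E_neg_mul_E e0 s hx0
  have hxx' : xInv * xMat = 1 := by
    have := BKaux.E_mul_E_neg e0 s hx0
    rwa [hxInv_def, hxMat_def]
  set hMat := xInv * g3 with hhMat_def
  -- xInv row 0 = g3⁻¹ row 0
  have hxrow : ∀ k, xInv oo k = g3⁻¹ oo k := by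
    intro k
    rw [hxInv_def, BKaux.E_apply]
    have he0oo : e0 oo = 1 := by rw [he0_def]; exact Pi.single_eq_same oo 1
    rw [he0oo, one_mul, hs_def]
    dsimp only
    by_cases hk : k = oo
    · subst hk
      rw [if_pos rfl, if_pos rfl, add_zero, hg3invcol oo, if_pos rfl]
    · rw [if_neg hk, if_neg (fun h => hk h.symm), zero_add]
  -- h row
  have hhrow : ∀ j, hMat oo j = (1 : Matrix (Fin (m+1)) (Fin (m+1)) R) oo j := by
    intro j
    rw [hhMat_def, Matrix.mul_apply]
    calc ∑ k, xInv oo k * g3 k j = ∑ k, g3⁻¹ oo k * g3 k j := by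
          exact Finset.sum_congr rfl fun k _ => by rw [hxrow k]
      _ = (g3⁻¹ * g3) oo j := (Matrix.mul_apply).symm
      _ = (1 : Matrix (Fin (m+1)) (Fin (m+1)) R) oo j := by rw [hg3inv]
  -- h column
  have hhcol : ∀ i, hMat i oo = (1 : Matrix (Fin (m+1)) (Fin (m+1)) R) i oo := by
    intro i
    rw [hhMat_def, Matrix.mul_apply]
    have : ∀ k, xInv i k * g3 k oo = if k = oo then xInv i oo else 0 := by
      intro k
      rw [hg3col' k]
      by_cases hk : k = oo
      · subst hk; simp
      · simp [hk]
    rw [Finset.sum_congr rfl fun k _ => this k, Finset.sum_ite_eq' Finset.univ oo _]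
    rw [if_pos (Finset.mem_univ oo)]
    rw [hxInv_def, BKaux.E_apply, hs0, mul_zero, add_zero, Matrix.one_apply]
  -- ModI h
  have hmodx : ModI I xInv := BKaux.ModI_E fun i j => Ideal.mul_mem_left _ _ (hsI j)
  have hmodh : ModI I hMat := BKaux.ModI_mul hmodx hmod3
  -- det h
  have hdetx : xMat.det = 1 := BKaux.det_E _ _ (by rw [dotProduct_neg, hx0, neg_zero])
  have hdetxInv : xInv.det = 1 := BKaux.det_E _ _ hx0
  have hdeth : hMat.det = 1 := by
    rw [hhMat_def, Matrix.det_mul, hdetxInv, hdet3]; ring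
  -- SL elements
  have hdetu : (BKaux.E (-b') eL).det = 1 :=
    BKaux.det_E _ _ (by rw [dotProduct_neg, hU0, neg_zero])
  have hdetv : (BKaux.E eL (-lam)).det = 1 :=
    BKaux.det_E _ _ (by rw [neg_dotProduct, hV0, neg_zero])
  refine ⟨⟨BKaux.E (-b') eL, hdetu⟩, ⟨BKaux.E eL (-lam), hdetv⟩,
    (tSL oo LL hooLL 1)⁻¹ * tSL LL oo hLLoo r * tSL oo LL hooLL 1,
    ⟨wmat, hdetw⟩, ⟨xMat, hdetx⟩, ⟨hMat, hdeth⟩, r, hrI, ?_, ?_, ?_, ?_, ?_, ?_, ?_⟩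
  · -- factorization
    apply Subtype.ext
    show G = (BKaux.E (-b') eL) * (BKaux.E eL (-lam)) *
        ((tSL oo LL hooLL 1)⁻¹ * tSL LL oo hLLoo r * tSL oo LL hooLL 1 :
          Matrix.SpecialLinearGroup (Fin (m+1)) R).1 * wmat * xMat * hMat
    symm
    have hzco : ((tSL oo LL hooLL 1)⁻¹ * tSL LL oo hLLoo r * tSL oo LL hooLL 1 :
        Matrix.SpecialLinearGroup (Fin (m+1)) R).1 = zMat := by
      rw [BKaux.tSL_inv]
      show Matrix.transvection oo LL (-1) * Matrix.transvection LL oo r *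
        Matrix.transvection oo LL 1 = zMat
      rw [BKaux.trans_prod hLLoo r, hzMat_def, hpz_def, hqz_def, heL_def, he0_def]
    rw [hzco]
    have huu : BKaux.E (-b') eL * Umat = 1 := BKaux.E_neg_mul_E b' eL hU0
    have hvv : BKaux.E eL (-lam) * Vmat = 1 := BKaux.E_negq_mul_E eL lam hV0
    rw [hhMat_def, hg3_def, hg2_def]
    calc BKaux.E (-b') eL * BKaux.E eL (-lam) * zMat * wmat * xMat *
          (xInv * (wInv * (zInv * (Vmat * (Umat * G)))))
        = BKaux.E (-b') eL * (BKaux.E eL (-lam) * (zMat * (wmat * (xMat *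
            (xInv * (wInv * (zInv * (Vmat * (Umat * G))))))))) := by
          simp only [Matrix.mul_assoc]
      _ = G := by
          rw [← Matrix.mul_assoc xMat xInv, hxx, Matrix.one_mul,
            ← Matrix.mul_assoc wmat wInv, hww, Matrix.one_mul,
            ← Matrix.mul_assoc zMat zInv, hzz, Matrix.one_mul,
            ← Matrix.mul_assoc (BKaux.E eL (-lam)) Vmat, hvv, Matrix.one_mul,
            ← Matrix.mul_assoc (BKaux.E (-b') eL) Umat, huu, Matrix.one_mul]
  · -- u properties
    refine ⟨?_, ?_, ?_⟩
    · intro i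
      show BKaux.E (-b') eL i i = 1
      rw [BKaux.E_apply, if_pos rfl]
      by_cases hi : i = LL
      · subst hi
        rw [Pi.neg_apply, hb'L, neg_zero, zero_mul, add_zero]
      · rw [heL_def, Pi.single_eq_of_ne hi, mul_zero, add_zero]
    · intro i j hji
      show BKaux.E (-b') eL i j = 0
      have hij : i ≠ j := (ne_of_lt hji).symm
      rw [BKaux.E_apply, if_neg hij, zero_add, heL_def,
        Pi.single_eq_of_ne (by
          intro h
          have hj : (j : ℕ) = m := by rw [h]; rfl
          have hi := i.isLt
          omega), mul_zero]
    · intro i j hij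
      show BKaux.E (-b') eL i j ∈ I
      rw [BKaux.E_apply, if_neg (ne_of_lt hij), zero_add]
      exact Ideal.mul_mem_right _ _ (neg_mem (hb'I i))
  · -- v properties
    refine ⟨?_, ?_, ?_⟩
    · intro i
      show BKaux.E eL (-lam) i i = 1
      rw [BKaux.E_apply, if_pos rfl]
      by_cases hi : i = LL
      · subst hi
        rw [Pi.neg_apply, hlamL, neg_zero, mul_zero, add_zero]
      · rw [heL_def, Pi.single_eq_of_ne hi, zero_mul, add_zero]
    · intro i j hij
      show BKaux.E eL (-lam) i j = 0
      rw [BKaux.E_apply, if_neg (ne_of_lt hij), zero_add, heL_def,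
        Pi.single_eq_of_ne (by
          intro h
          have hi : (i : ℕ) = m := by rw [h]; rfl
          have hj := j.isLt
          omega), zero_mul]
    · intro i j hji
      show BKaux.E eL (-lam) i j ∈ I
      rw [BKaux.E_apply, if_neg (ne_of_lt hji).symm, zero_add]
      exact Ideal.mul_mem_left _ _ (neg_mem (hlamI j))
  · -- z
    rfl
  · -- w properties
    refine ⟨?_, ?_, ?_⟩
    · intro i
      show BKaux.E c' e0 i i = 1
      rw [BKaux.E_apply, if_pos rfl]
      by_cases hi : i = oo
      · subst hi
        rw [hc'0, zero_mul, add_zero]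
      · rw [he0_def, Pi.single_eq_of_ne hi, mul_zero, add_zero]
    · intro i h1 h2
      have h1' : i ≠ oo := h1
      show BKaux.E c' e0 i oo ∈ I
      rw [BKaux.E_apply, if_neg h1', zero_add, he0_def, Pi.single_eq_same, mul_one]
      exact hc'I i
    · intro i j hij hcond
      show BKaux.E c' e0 i j = 0
      rw [BKaux.E_apply, if_neg hij, zero_add]
      rcases hcond with hj | hi
      · have hj' : j ≠ oo := hj
        rw [he0_def, Pi.single_eq_of_ne hj', mul_zero]
      · have hiLL : i = LL := hi
        rw [hiLL, hc'L, zero_mul]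
  · -- x properties
    refine ⟨?_, ?_, ?_⟩
    · intro i
      show BKaux.E (-e0) s i i = 1
      rw [BKaux.E_apply, if_pos rfl]
      by_cases hi : i = oo
      · subst hi
        rw [hs0, mul_zero, add_zero]
      · rw [Pi.neg_apply, he0_def, Pi.single_eq_of_ne hi, neg_zero, zero_mul, add_zero]
    · intro j hj
      have hj' : j ≠ oo := hj
      show BKaux.E (-e0) s oo j ∈ I
      rw [BKaux.E_apply, if_neg (fun h : oo = j => hj' h.symm), zero_add, Pi.neg_apply,
        he0_def, Pi.single_eq_same]
      exact Ideal.mul_mem_left _ _ (hsI j)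
    · intro i j hij hi
      have hi' : i ≠ oo := hi
      show BKaux.E (-e0) s i j = 0
      rw [BKaux.E_apply, if_neg hij, zero_add, Pi.neg_apply, he0_def,
        Pi.single_eq_of_ne hi', neg_zero, zero_mul]
  · -- h properties
    refine ⟨?_, ?_, ?_, ?_⟩
    · intro j; exact hhrow j
    · intro i; exact hhcol i
    · exact hmodh
    · -- block determinant
      have hzero : (0 : Fin (m+1)) = oo := by apply Fin.ext; simp [hoo_def]
      have hd := Matrix.det_succ_row_zero hMat
      have hsum : (∑ j : Fin (m+1), (-1 : R) ^ (j : ℕ) * hMat 0 j *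
            (hMat.submatrix Fin.succ j.succAbove).det)
          = (-1 : R) ^ ((0 : Fin (m+1)) : ℕ) * hMat 0 (0 : Fin (m+1)) *
            (hMat.submatrix Fin.succ (Fin.succAbove 0)).det := by
        refine Finset.sum_eq_single _ ?_ ?_
        · intro j _ hj
          have h0 : hMat 0 j = 0 := by
            rw [hzero, hhrow j, Matrix.one_apply_ne]
            rw [← hzero]
            exact fun h => hj h.symm
          rw [h0, mul_zero, zero_mul]
        · intro h; exact absurd (Finset.mem_univ _) h
      rw [hsum] at hd
      have h00 : hMat 0 (0 : Fin (m+1)) = 1 := by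
        rw [hzero, hhrow oo, Matrix.one_apply_eq]
      rw [h00, Fin.val_zero, pow_zero, one_mul, one_mul, hdeth, Fin.succAbove_zero] at hd
      exact hd.symm
end

section
/- Let R be a commutative ring, I an ideal of R, n ≥ 1, v = (v₁,…,vₙ)ᵀ ∈ Rⁿ a column, and v' = (v₁², …, vₙ²)ᵀ the column of squares of its components. Then for every n×n matrix b with all entries in I there exists a symmetric n×n matrix a (aᵀ = a) with all entries in I such that b·v' = a·v. (Lemma: the symplectic squaring trick.) -/
open Matrix

/-- The symplectic squaring trick: for any matrix `b` over `I` there is a symmetric matrix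
`a` over `I` with `b·v' = a·v`, where `v'` is the column of squares of `v`. -/
theorem symplectic_squaring_trick {R : Type*} [CommRing R] (I : Ideal R) (n : ℕ) (hn : 1 ≤ n)
    (v : Fin n → R) (b : Matrix (Fin n) (Fin n) R) (hb : ∀ i j, b i j ∈ I) :
    ∃ a : Matrix (Fin n) (Fin n) R,
      aᵀ = a ∧ (∀ i j, a i j ∈ I) ∧
      b.mulVec (fun i => v i ^ 2) = a.mulVec v := by
  refine ⟨fun i j => b i j * v j + b j i * v i - (if i = j then ∑ k, b k i * v k else 0),
    ?_, ?_, ?_⟩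
  · ext i j
    change b j i * v i + b i j * v j - (if j = i then ∑ k, b k j * v k else 0) = b i j * v j + b j i * v i - (if i = j then ∑ k, b k i * v k else 0)
    rcases eq_or_ne i j with h | h
    · subst h; ring
    · simp [h, Ne.symm h]; ring
  · intro i j
    refine I.sub_mem (I.add_mem (I.mul_mem_right _ (hb i j)) (I.mul_mem_right _ (hb j i))) ?_
    split
    · exact Ideal.sum_mem I fun k _ => I.mul_mem_right _ (hb k i)
    · exact I.zero_mem
  · funext i
    simp only [mulVec, dotProduct, sub_mul, add_mul, Finset.sum_sub_distrib,
      Finset.sum_add_distrib, ite_mul, zero_mul, Finset.sum_ite_eq, Finset.mem_univ, if_true]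
    rw [Finset.sum_mul]
    ring_nf
    have h1 : ∑ x : Fin n, b x i * v i * v x = ∑ x : Fin n, b x i * v x * v i :=
      Finset.sum_congr rfl fun x _ => by ring
    rw [h1, Finset.sum_congr rfl fun x _ => (by ring : v i * b x i * v x = b x i * v x * v i), add_sub_cancel_right]
end

section
/- Let R be a commutative ring, I an ideal of R, ℓ ≥ 2, and suppose SR_ℓ(I) holds. Then for every I-unimodular column v ∈ R^{2ℓ}, writing v₊ = (v₁,…,v_ℓ)ᵀ and v₋ = (v_{ℓ+1},…,v_{2ℓ})ᵀ for its upper and lower halves, there exists a symmetric ℓ×ℓ matrix a (aᵀ = a) with all entries in I such that the column v₊ + p·a·v₋ ∈ R^ℓ is I-unimodular. (Lemma on the action of the symplectic unipotent radical, case Φ = C_ℓ.) -/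
open Matrix

/-- The `ℓ×ℓ` antidiagonal permutation matrix `p` with `p_{ij} = 1` iff `j = ℓ+1−i`
(0-indexed: `j = ℓ−1−i`). -/
def pAntidiag (R : Type*) [CommRing R] (l : ℕ) : Matrix (Fin l) (Fin l) R :=
  fun i j => if (j : ℕ) = l - 1 - (i : ℕ) then 1 else 0

/-- Binomial fact: if `s ∈ P` then `(s+j)^n - j^n ∈ P`. -/
lemma aux_sub_pow_mem {R : Type*} [CommRing R] {P : Ideal R} {s j : R} (hs : s ∈ P) :
    ∀ n : ℕ, (s + j) ^ n - j ^ n ∈ P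
  | 0 => by simp
  | (n + 1) => by
      have h := aux_sub_pow_mem (j := j) hs n
      have e : (s + j) ^ (n + 1) - j ^ (n + 1)
          = (s + j) * ((s + j) ^ n - j ^ n) + s * j ^ n := by ring
      rw [e]
      exact add_mem (Ideal.mul_mem_left _ _ h) (Ideal.mul_mem_right _ _ hs)

/-- Pigeonhole: a high enough power of a finite sum lies in the ideal generated by squares. -/
lemma aux_pow_sum_mem_span_sq {R : Type*} [CommRing R] {ι : Type*} [DecidableEq ι]
    (s : Finset ι) (t : ι → R) :
    ∀ n : ℕ, s.card < n → (∑ k ∈ s, t k) ^ n ∈ Ideal.span ((fun k => t k ^ 2) '' ↑s) := by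
  induction s using Finset.induction_on with
  | empty =>
      intro n hn
      rw [Finset.sum_empty, zero_pow (by omega)]
      exact zero_mem _
  | @insert a s' ha ih =>
      intro n hn
      rw [Finset.sum_insert ha, add_pow]
      refine Ideal.sum_mem _ (fun k hk => ?_)
      by_cases h2 : 2 ≤ k
      · have hta : t a ^ k = t a ^ 2 * t a ^ (k - 2) := by
          rw [← pow_add]; congr 1; omega
        rw [hta, mul_assoc, mul_assoc]
        refine Ideal.mul_mem_right _ _ (Ideal.subset_span ⟨a, ?_, rfl⟩)
        simp
      · have hcard : s'.card + 1 < n := by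
          simpa [Finset.card_insert_of_notMem ha] using hn
        have hnk : s'.card < n - k := by omega
        have hmono : Ideal.span ((fun k => t k ^ 2) '' ↑s')
            ≤ Ideal.span ((fun k => t k ^ 2) '' ↑(insert a s')) := by
          refine Ideal.span_mono (Set.image_mono ?_)
          exact_mod_cast Finset.subset_insert a s'
        exact Ideal.mul_mem_right _ _ (Ideal.mul_mem_left _ _ (hmono (ih (n - k) hnk)))

lemma aux_pAntidiag_mulVec {R : Type*} [CommRing R] {l : ℕ} (hl : 0 < l)
    (u : Fin l → R) (i : Fin l) :
    (pAntidiag R l).mulVec u i = u ⟨l - 1 - (i : ℕ), by omega⟩ := by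
  simp only [Matrix.mulVec, dotProduct, pAntidiag]
  rw [Finset.sum_eq_single (⟨l - 1 - (i : ℕ), by omega⟩ : Fin l)]
  · rw [if_pos rfl, one_mul]
  · intro s _ hs
    rw [if_neg, zero_mul]
    exact fun h => hs (Fin.ext h)
  · exact fun h => absurd (Finset.mem_univ _) h

/-- Action of the symplectic unipotent radical on unimodular columns (case `C_ℓ`). -/
theorem symplectic_unipotent_action {R : Type*} [CommRing R] (I : Ideal R) (l : ℕ)
    (hl : 2 ≤ l) (hSR : SRCond l I) (v : Fin (2 * l) → R) (hv : IsIUnimodular I v) :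
    ∃ a : Matrix (Fin l) (Fin l) R,
      aᵀ = a ∧ (∀ i j, a i j ∈ I) ∧
      IsIUnimodular I (fun i : Fin l =>
        v (⟨(i : ℕ), by have := i.isLt; omega⟩ : Fin (2 * l)) +
          (pAntidiag R l * a).mulVec
            (fun k : Fin l => v (⟨l + (k : ℕ), by have := k.isLt; omega⟩ : Fin (2 * l))) i) := by
  obtain ⟨hv1, hv2, hv3⟩ := hv
  have hl0 : 0 < l := by omega
  set up : Fin l → Fin (2 * l) := fun i => ⟨(i : ℕ), by have := i.isLt; omega⟩ with hup
  set lo : Fin l → Fin (2 * l) := fun k => ⟨l + (k : ℕ), by have := k.isLt; omega⟩ with hlo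
  set vp : Fin l → R := fun i => v (up i) with hvp
  set vm : Fin l → R := fun k => v (lo k) with hvm
  -- Step A: write 1 as a combination of the entries of v.
  have h1 : (1 : R) ∈ Ideal.span (Set.range v) := by rw [hv3]; exact Submodule.mem_top
  obtain ⟨x, hx⟩ := (Submodule.mem_span_range_iff_exists_fun _).mp h1
  simp only [smul_eq_mul] at hx
  -- split the sum into upper and lower halves
  have hsplit : ∀ f : Fin (2 * l) → R,
      (∑ i, f i) = (∑ i : Fin l, f (up i)) + ∑ k : Fin l, f (lo k) := by
    intro f
    let e : Fin l ⊕ Fin l ≃ Fin (2 * l) := finSumFinEquiv.trans (finCongr (two_mul l).symm)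
    have he : ∀ z : Fin l ⊕ Fin l, f (e z) = Sum.elim (fun i => f (up i)) (fun k => f (lo k)) z := by
      rintro (i | k) <;>
        · show f _ = f _
          congr 1 <;> try apply Fin.ext
          all_goals simp [e, up, lo]
    rw [← Fintype.sum_equiv e (fun z => f (e z)) f (fun z => rfl)]
    rw [Fintype.sum_congr _ _ he, Fintype.sum_sum_type]
    simp
  set s0 : R := ∑ i : Fin l, x (up i) * v (up i) with hs0
  set jj : R := ∑ k : Fin l, x (lo k) * v (lo k) with hjj
  have hsj : s0 + jj = 1 := by
    rw [hs0, hjj, ← hsplit (fun i => x i * v i)]; exact hx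
  have hs0P : s0 ∈ Ideal.span (Set.range vp) := by
    refine Ideal.sum_mem _ (fun i _ => Ideal.mul_mem_left _ _ (Ideal.subset_span ⟨i, rfl⟩))
  have hvmI : ∀ k : Fin l, vm k ∈ I := by
    intro k
    refine hv2 (lo k) ?_
    simp [lo]; omega
  have hjjI : jj ∈ I := Ideal.sum_mem _ (fun k _ => I.mul_mem_left _ (hvmI k))
  set c : R := jj ^ (l + 1) with hc
  have hcI : c ∈ I := I.pow_mem_of_mem hjjI _ (by omega)
  have h1c : 1 - c ∈ Ideal.span (Set.range vp) := by
    have h := aux_sub_pow_mem (j := jj) hs0P (l + 1)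
    rwa [hsj, one_pow] at h
  -- c is a combination of squares of the entries of vm
  have hc2 : c ∈ Ideal.span (Set.range (fun j => vm j ^ 2)) := by
    have h := aux_pow_sum_mem_span_sq Finset.univ (fun k : Fin l => x (lo k) * v (lo k)) (l + 1)
      (by simp)
    have hle : Ideal.span ((fun k : Fin l => (x (lo k) * v (lo k)) ^ 2) '' ↑(Finset.univ : Finset (Fin l)))
        ≤ Ideal.span (Set.range (fun j => vm j ^ 2)) := by
      rw [Ideal.span_le]
      rintro z hz
      obtain ⟨k, -, hk⟩ := hz
      rw [SetLike.mem_coe, ← hk]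
      show (x (lo k) * v (lo k)) ^ 2 ∈ _
      have hh : (x (lo k) * v (lo k)) ^ 2 = x (lo k) ^ 2 * (v (lo k)) ^ 2 := by ring
      rw [hh]
      exact Ideal.mul_mem_left _ _ (Ideal.subset_span ⟨k, rfl⟩)
    exact hle h
  obtain ⟨q, hq⟩ := (Submodule.mem_span_range_iff_exists_fun _).mp hc2
  simp only [smul_eq_mul] at hq
  -- Step C: apply the stable range condition to (vp, c)
  set w : Fin (l + 1) → R := Fin.snoc vp c with hw
  have hwuni : IsIUnimodular I w := by
    refine ⟨?_, ?_, ?_⟩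
    · intro i hi
      have hi' : i = Fin.castSucc ⟨0, hl0⟩ := Fin.ext (by simp [hi])
      rw [hi', hw, Fin.snoc_castSucc]
      exact hv1 (up ⟨0, hl0⟩) rfl
    · intro i hi
      by_cases h : (i : ℕ) < l
      · have hi' : i = Fin.castSucc ⟨(i : ℕ), h⟩ := Fin.ext rfl
        rw [hi', hw, Fin.snoc_castSucc]
        exact hv2 (up ⟨(i : ℕ), h⟩) hi
      · have hi' : i = Fin.last l := Fin.ext (by have := i.isLt; simp; omega)
        rw [hi', hw, Fin.snoc_last]
        exact hcI
    · rw [Ideal.eq_top_iff_one]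
      have hsub : Ideal.span (Set.range vp) ≤ Ideal.span (Set.range w) := by
        refine Ideal.span_mono ?_
        rintro _ ⟨i, rfl⟩
        exact ⟨i.castSucc, by rw [hw, Fin.snoc_castSucc]⟩
      have hcw : c ∈ Ideal.span (Set.range w) :=
        Ideal.subset_span ⟨Fin.last l, by rw [hw, Fin.snoc_last]⟩
      have := add_mem (hsub h1c) hcw
      simpa using this
  obtain ⟨b, hbI, hbu⟩ := hSR w hwuni
  simp only [hw, Fin.snoc_castSucc, Fin.snoc_last] at hbu
  -- hbu : IsIUnimodular I (fun i => vp i + c * b i)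
  -- Step D: build the symmetric matrix
  set σ : Fin l → Fin l := fun i => ⟨l - 1 - (i : ℕ), by omega⟩ with hσ
  have hσσ : ∀ i, σ (σ i) = i := by
    intro i
    have := i.isLt
    apply Fin.ext
    simp [hσ]
    omega
  set B : R := ∑ i : Fin l, b (σ i) * vm i with hB
  have hBI : B ∈ I := Ideal.sum_mem _ (fun i _ => I.mul_mem_right _ (hbI (σ i)))
  set a : Matrix (Fin l) (Fin l) R := fun r s =>
    b (σ r) * q s * vm s + b (σ s) * q r * vm r - (if r = s then B * q r else 0) with ha
  have hsym : aᵀ = a := by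
    ext r s
    rw [Matrix.transpose_apply, ha]
    by_cases h : r = s
    · subst h; rfl
    · simp only [if_neg h, if_neg (Ne.symm h)]
      ring
  have hent : ∀ r s, a r s ∈ I := by
    intro r s
    rw [ha]
    refine sub_mem (add_mem ?_ ?_) ?_
    · exact I.mul_mem_right _ (I.mul_mem_right _ (hbI (σ r)))
    · exact I.mul_mem_right _ (I.mul_mem_right _ (hbI (σ s)))
    · split_ifs
      · exact I.mul_mem_right _ hBI
      · exact zero_mem _
  have havm : a.mulVec vm = fun r => b (σ r) * c := by
    funext r
    simp only [Matrix.mulVec, dotProduct, ha]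
    have hterm : ∀ s : Fin l,
        (b (σ r) * q s * vm s + b (σ s) * q r * vm r - (if r = s then B * q r else 0)) * vm s
        = b (σ r) * (q s * vm s ^ 2) + (q r * vm r) * (b (σ s) * vm s)
          - (if r = s then B * q r * vm s else 0) := by
      intro s; split_ifs <;> ring
    rw [Finset.sum_congr rfl (fun s _ => hterm s)]
    rw [Finset.sum_sub_distrib, Finset.sum_add_distrib, ← Finset.mul_sum, ← Finset.mul_sum]
    rw [Finset.sum_ite_eq Finset.univ r (fun s => B * q r * vm s)]
    simp only [Finset.mem_univ, if_true]
    rw [hq, ← hB]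
    ring
  have key : ∀ i : Fin l, (pAntidiag R l * a).mulVec vm i = c * b i := by
    intro i
    rw [← Matrix.mulVec_mulVec, havm, aux_pAntidiag_mulVec hl0]
    have : σ (σ i) = i := hσσ i
    calc b (σ ⟨l - 1 - (i : ℕ), by omega⟩) * c
        = b (σ (σ i)) * c := rfl
      _ = c * b i := by rw [hσσ i, mul_comm]
  refine ⟨a, hsym, hent, ?_⟩
  have hfun : (fun i : Fin l =>
      v (⟨(i : ℕ), by have := i.isLt; omega⟩ : Fin (2 * l)) +
        (pAntidiag R l * a).mulVec
          (fun k : Fin l => v (⟨l + (k : ℕ), by have := k.isLt; omega⟩ : Fin (2 * l))) i)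
      = fun i : Fin l => vp i + c * b i := by
    funext i
    have h1 : (fun k : Fin l => v (⟨l + (k : ℕ), by have := k.isLt; omega⟩ : Fin (2 * l))) = vm := rfl
    rw [h1, key i]
  rw [hfun]
  exact hbu
end

section
/- Let R be a commutative ring, I an ideal of R, and n ≥ 1. The following two statements are equivalent: (i) every row (a₁,…,a_{n+1}) ∈ I^{n+1} can be I-shortened; (ii) for every I-unimodular row (b, a₁, …, aₙ, d) of length n+2 there exist c₁,…,cₙ ∈ I such that for every b' belonging to the ideal J = I·a₁ + ⋯ + I·aₙ + I·d, the row (b + b', a₁ + c₁d, …, aₙ + cₙd) of length n+1 is I-unimodular. (Lemma on relativization of the absolute stable rank.) -/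
open Matrix

/-- `𝔍(a₁,…,aₘ)`, the intersection of all maximal ideals containing the `aᵢ`. -/
noncomputable def JacOf {R : Type*} [CommRing R] {m : ℕ} (a : Fin m → R) : Ideal R :=
  (Ideal.span (Set.range a)).jacobson

/-- The row `a ∈ I^{n+1}` can be `I`-shortened. -/
def CanIShorten {R : Type*} [CommRing R] (I : Ideal R) {n : ℕ} (a : Fin (n + 1) → R) : Prop :=
  ∃ c : Fin n → R, (∀ i, c i ∈ I) ∧
    JacOf (fun i : Fin n => a i.castSucc + c i * a (Fin.last n)) = JacOf a

lemma jacobson_le_jacobson_of {R : Type*} [CommRing R] {K L : Ideal R}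
    (h : ∀ m : Ideal R, m.IsMaximal → L ≤ m → K ≤ m) : K.jacobson ≤ L.jacobson := by
  rw [Ideal.jacobson, Ideal.jacobson]
  exact le_sInf fun m hm => sInf_le ⟨h m hm.2 hm.1, hm.2⟩

/-- Relativization of the absolute stable rank: the `I`-shortening condition is equivalent
to a condition on `I`-unimodular rows. -/
theorem relative_asr_unimodular {R : Type*} [CommRing R] (I : Ideal R) (n : ℕ) (hn : 1 ≤ n) :
    (∀ a : Fin (n + 1) → R, (∀ i, a i ∈ I) → CanIShorten I a) ↔
    (∀ w : Fin (n + 2) → R, IsIUnimodular I w →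
      ∃ c : Fin n → R, (∀ i, c i ∈ I) ∧
        ∀ b' ∈ (I * Ideal.span
            (insert (w (Fin.last (n + 1)))
              (Set.range fun i : Fin n => w i.succ.castSucc)) : Ideal R),
          IsIUnimodular I
            (Fin.cons (w 0 + b')
              (fun i : Fin n => w i.succ.castSucc + c i * w (Fin.last (n + 1)))
              : Fin (n + 1) → R)) := by
  constructor
  · -- forward direction
    intro h w hw
    obtain ⟨hw0, hwI, hwspan⟩ := hw
    obtain ⟨c, hcI, hjac⟩ := h (fun i => w i.succ)
      (fun i => hwI i.succ (by simp [Fin.val_succ]))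
    refine ⟨c, hcI, ?_⟩
    intro b' hb'
    have hb'I : b' ∈ I := Ideal.mul_le_left hb'
    have hb'J : b' ∈ Ideal.span
        (insert (w (Fin.last (n + 1)))
          (Set.range fun i : Fin n => w i.succ.castSucc)) := Ideal.mul_le_right hb'
    refine ⟨?_, ?_, ?_⟩
    · intro i hi
      have hi0 : i = 0 := Fin.ext hi
      subst hi0
      rw [Fin.cons_zero]
      have h1 : w 0 - 1 ∈ I := hw0 0 rfl
      have := I.add_mem h1 hb'I
      convert this using 1; ring
    · intro i hi
      rcases Fin.eq_zero_or_eq_succ i with rfl | ⟨j, rfl⟩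
      · simp at hi
      · rw [Fin.cons_succ]
        exact I.add_mem (hwI _ (by simp [Fin.val_succ]))
          (I.mul_mem_right _ (hcI j))
    · by_contra hne
      obtain ⟨m, hmmax, hmle⟩ := Ideal.exists_le_maximal _ hne
      have hmem : ∀ j : Fin (n + 1),
          (Fin.cons (w 0 + b')
            (fun i : Fin n => w i.succ.castSucc + c i * w (Fin.last (n + 1)))
            : Fin (n + 1) → R) j ∈ m :=
        fun j => hmle (Ideal.subset_span ⟨j, rfl⟩)
      have hsle : Ideal.span (Set.range fun i : Fin n =>
          (fun i : Fin (n+1) => w i.succ) i.castSucc + c i *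
            (fun i : Fin (n+1) => w i.succ) (Fin.last n)) ≤ m := by
        rw [Ideal.span_le]
        rintro _ ⟨i, rfl⟩
        have := hmem i.succ
        rw [Fin.cons_succ] at this
        simpa only [Fin.succ_castSucc, Fin.succ_last, Nat.succ_eq_add_one, SetLike.mem_coe] using this
      have hjle : JacOf (fun i : Fin (n+1) => w i.succ) ≤ m := by
        rw [← hjac, JacOf, Ideal.jacobson]
        exact sInf_le ⟨hsle, hmmax⟩
      have hvm : ∀ i : Fin (n + 1), w i.succ ∈ m := fun i =>
        hjle (Ideal.le_jacobson (Ideal.subset_span ⟨i, rfl⟩))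
      have hb'm : b' ∈ m := by
        refine (Ideal.span_le.mpr ?_) hb'J
        rintro x (rfl | ⟨i, rfl⟩)
        · simpa [Fin.succ_last] using hvm (Fin.last n)
        · simpa only [Fin.succ_castSucc, SetLike.mem_coe] using hvm i.castSucc
      have hw0m : w 0 ∈ m := by
        have := hmem 0
        rw [Fin.cons_zero] at this
        have := m.sub_mem this hb'm
        simpa using this
      have : (⊤ : Ideal R) ≤ m := by
        rw [← hwspan, Ideal.span_le]
        rintro _ ⟨j, rfl⟩
        rcases Fin.eq_zero_or_eq_succ j with rfl | ⟨k, rfl⟩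
        · exact hw0m
        · exact hvm k
      exact hmmax.ne_top (top_le_iff.mp this)
  · -- backward direction
    intro h a haI
    set w : Fin (n + 2) → R := Fin.cons 1 a with hwdef
    have hwuni : IsIUnimodular I w := by
      refine ⟨?_, ?_, ?_⟩
      · intro i hi
        have hi0 : i = 0 := Fin.ext hi
        subst hi0
        simp [hwdef]
      · intro i hi
        rcases Fin.eq_zero_or_eq_succ i with rfl | ⟨j, rfl⟩
        · simp at hi
        · simpa [hwdef] using haI j
      · rw [Ideal.eq_top_iff_one]
        exact Ideal.subset_span ⟨0, by simp [hwdef]⟩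
    obtain ⟨c, hcI, H⟩ := h w hwuni
    -- simplify the entries of w
    have hwsucc : ∀ i : Fin n, w i.succ.castSucc = a i.castSucc := by
      intro i
      rw [← Fin.succ_castSucc, hwdef, Fin.cons_succ]
    have hwlast : w (Fin.last (n + 1)) = a (Fin.last n) := by
      rw [← Fin.succ_last, hwdef, Fin.cons_succ]
    refine ⟨c, hcI, ?_⟩
    apply le_antisymm
    · apply jacobson_le_jacobson_of
      intro m hmax hle
      rw [Ideal.span_le]
      rintro _ ⟨i, rfl⟩
      exact m.add_mem (hle (Ideal.subset_span ⟨i.castSucc, rfl⟩))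
        (m.mul_mem_left _ (hle (Ideal.subset_span ⟨Fin.last n, rfl⟩)))
    · apply jacobson_le_jacobson_of
      intro m hmax hle
      have hshortm : ∀ i : Fin n, a i.castSucc + c i * a (Fin.last n) ∈ m :=
        fun i => hle (Ideal.subset_span ⟨i, rfl⟩)
      have hlastm : a (Fin.last n) ∈ m := by
        by_contra hnot
        have hsq : a (Fin.last n) * a (Fin.last n) ∉ m :=
          fun hmem => hnot (((hmax.isPrime.mem_or_mem hmem).elim id id))
        obtain ⟨y, i0, hi0m, hyi⟩ := hmax.exists_inv hsq
        set b' : R := -(y * (a (Fin.last n) * a (Fin.last n))) with hb'def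
        have hb'mem : b' ∈ (I * Ideal.span
            (insert (w (Fin.last (n + 1)))
              (Set.range fun i : Fin n => w i.succ.castSucc)) : Ideal R) := by
          refine neg_mem (Ideal.mul_mem_left _ y (Ideal.mul_mem_mul ?_ ?_))
          · exact haI (Fin.last n)
          · exact Ideal.subset_span (by rw [hwlast]; exact Or.inl rfl)
        obtain ⟨_, _, hspan⟩ := H b' hb'mem
        have hmle2 : Ideal.span (Set.range
            (Fin.cons (w 0 + b')
              (fun i : Fin n => w i.succ.castSucc + c i * w (Fin.last (n + 1)))
              : Fin (n + 1) → R)) ≤ m := by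
          rw [Ideal.span_le]
          rintro _ ⟨j, rfl⟩
          rcases Fin.eq_zero_or_eq_succ j with rfl | ⟨k, rfl⟩
          · rw [Fin.cons_zero]
            have hw0 : w 0 = 1 := by simp [hwdef]
            rw [hw0]
            have : (1 : R) + b' = i0 := by rw [hb'def]; linear_combination -hyi
            rw [this]; exact hi0m
          · rw [Fin.cons_succ, hwsucc, hwlast]
            exact hshortm k
        rw [hspan] at hmle2
        exact hmax.ne_top (top_le_iff.mp hmle2)
      rw [Ideal.span_le]
      rintro _ ⟨j, rfl⟩
      refine Fin.lastCases ?_ ?_ j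
      · exact hlastm
      · intro i
        have := m.sub_mem (hshortm i) (m.mul_mem_left (c i) hlastm)
        simpa using this
end

section
/- Let R be a commutative ring, I an ideal of R, n ≥ 2, and 1 ≤ k ≤ n−1 such that SR_k(I) holds. Then for every g ∈ SL(n,R) with g ≡ 1ₙ (mod I) there exist an upper unitriangular matrix x with all off-diagonal entries in I and a lower unitriangular matrix y with all off-diagonal entries in I such that the first column w = y·x·g·e₁ of the product satisfies w_j = 0 for all j = k+1, …, n. (Lemma on the action of unipotent radicals, case Φ = A_{n−1}.) -/
open Matrix

lemma sum_fin_lt {M : Type*} [AddCommMonoid M] {n k : ℕ} (hk : k ≤ n) (F : Fin n → M) :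
    (∑ j : Fin n, if (j : ℕ) < k then F j else 0) = ∑ j : Fin k, F (Fin.castLE hk j) := by
  classical
  set f : ℕ → M := fun m => if h : m < n then (if m < k then F ⟨m, h⟩ else 0) else 0 with hf
  have h1 : (∑ j : Fin n, if (j : ℕ) < k then F j else 0) = ∑ m ∈ Finset.range n, f m := by
    rw [← Fin.sum_univ_eq_sum_range]
    apply Finset.sum_congr rfl
    intro j _
    simp [hf, j.isLt]
  have h2 : ∑ j : Fin k, F (Fin.castLE hk j) = ∑ m ∈ Finset.range k, f m := by
    rw [← Fin.sum_univ_eq_sum_range]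
    apply Finset.sum_congr rfl
    intro j _
    have h3 : (j : ℕ) < n := lt_of_lt_of_le j.isLt hk
    simp only [hf, dif_pos h3, if_pos j.isLt]
    rfl
  rw [h1, h2]
  rw [← Finset.sum_subset (Finset.range_subset_range.mpr hk)]
  intro m hm hmk
  simp only [Finset.mem_range] at hm hmk
  simp [hf, hm, hmk]

/-- Action of unipotent radicals on the first column (case `A_{n−1}`). -/
theorem unipotent_action_SLn {R : Type*} [CommRing R] (I : Ideal R) (n k : ℕ)
    (hn : 2 ≤ n) (hk1 : 1 ≤ k) (hk2 : k ≤ n - 1) (hSR : SRCond k I)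
    (g : Matrix.SpecialLinearGroup (Fin n) R)
    (hg : ModI I (g : Matrix (Fin n) (Fin n) R)) :
    ∃ x y : Matrix (Fin n) (Fin n) R,
      -- x upper unitriangular with off-diagonal entries in I
      (∀ i, x i i = 1) ∧ (∀ i j : Fin n, j < i → x i j = 0) ∧
        (∀ i j : Fin n, i < j → x i j ∈ I) ∧
      -- y lower unitriangular with off-diagonal entries in I
      (∀ i, y i i = 1) ∧ (∀ i j : Fin n, i < j → y i j = 0) ∧
        (∀ i j : Fin n, j < i → y i j ∈ I) ∧
      -- the first column of y·x·g vanishes in rows k+1,…,n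
      (∀ j : Fin n, k ≤ (j : ℕ) →
        (y * x * (g : Matrix (Fin n) (Fin n) R)) j ⟨0, by omega⟩ = 0) := by
  classical
  have hkn : k ≤ n := by omega
  have hkn' : k < n := by omega
  set G : Matrix (Fin n) (Fin n) R := (g : Matrix (Fin n) (Fin n) R) with hG
  set z0 : Fin n := ⟨0, by omega⟩ with hz0
  set a : Fin n → R := fun i => G i z0 with ha
  set r : Fin n → R := fun j => (adjugate G) z0 j with hr
  have hone : ∑ j, r j * a j = 1 := by
    have hdet : G.det = 1 := g.prop
    have h1 : (adjugate G * G) z0 z0 = 1 := by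
      rw [Matrix.adjugate_mul, hdet, one_smul, Matrix.one_apply_eq]
    rw [Matrix.mul_apply] at h1
    exact h1
  have haI : ∀ i : Fin n, i ≠ z0 → a i ∈ I := by
    intro i hi
    have h := hg i z0
    rw [Matrix.one_apply_ne hi] at h
    simpa [ha] using h
  have haI' : ∀ i : Fin n, k ≤ (i : ℕ) → a i ∈ I := by
    intro i hi
    apply haI
    intro h
    have : (i : ℕ) = 0 := by rw [h]
    omega
  have ha0 : a z0 - 1 ∈ I := by
    have h := hg z0 z0
    rwa [Matrix.one_apply_eq] at h
  set s : R := ∑ j : Fin n, (if k ≤ (j : ℕ) then r j * a j else 0) with hs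
  have hsI : s ∈ I := by
    apply Ideal.sum_mem
    intro j _
    split
    · exact Ideal.mul_mem_left _ _ (haI' j (by assumption))
    · exact I.zero_mem
  set a' : Fin (k + 1) → R := fun i => if h : (i : ℕ) < k then a ⟨i, by omega⟩ else s with ha'
  have hA' : IsIUnimodular I a' := by
    refine ⟨?_, ?_, ?_⟩
    · intro i hi
      have hik : (i : ℕ) < k := by omega
      have he : a' i = a z0 := by
        simp only [ha', dif_pos hik]
        congr 1
        exact Fin.ext (by simp [hi, hz0])
      rw [he]
      exact ha0
    · intro i hi
      by_cases hik : (i : ℕ) < k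
      · have he : a' i = a ⟨i, by omega⟩ := by simp only [ha', dif_pos hik]
        rw [he]
        apply haI
        intro h
        apply hi
        have := congrArg Fin.val h
        exact this
      · have he : a' i = s := by simp only [ha', dif_neg hik]
        rw [he]
        exact hsI
    · rw [Ideal.eq_top_iff_one]
      have h1 : (1 : R) = (∑ j : Fin n, if (j : ℕ) < k then r j * a j else 0) + s := by
        rw [hs, ← Finset.sum_add_distrib, ← hone]
        apply Finset.sum_congr rfl
        intro j _
        by_cases hj : (j : ℕ) < k
        · rw [if_pos hj, if_neg (by omega)]; ring
        · rw [if_neg hj, if_pos (by omega)]; ring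
      rw [h1]
      apply Ideal.add_mem
      · apply Ideal.sum_mem
        intro j _
        split
        · rename_i hj
          refine Ideal.mul_mem_left _ _ (Ideal.subset_span ⟨⟨(j : ℕ), by omega⟩, ?_⟩)
          simp only [ha']
          rw [dif_pos (by simpa using hj)]
        · exact Ideal.zero_mem _
      · refine Ideal.subset_span ⟨Fin.last k, ?_⟩
        simp only [ha']
        rw [dif_neg (by simp)]
    
  obtain ⟨b, hbI, hb⟩ := hSR a' hA'
  set c : Fin k → R := fun i => a ⟨i, by omega⟩ + s * b i with hc
  have hceq : (fun i : Fin k => a' i.castSucc + a' (Fin.last k) * b i) = c := by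
    funext i
    have h1 : ((i.castSucc : Fin (k + 1)) : ℕ) < k := by simpa using i.isLt
    have h2 : ¬ ((Fin.last k : ℕ) < k) := by simp
    simp only [ha', hc, dif_pos h1, dif_neg h2]
    congr 1
  rw [hceq] at hb
  have hcspan : Ideal.span (Set.range c) = ⊤ := hb.2.2
  have h1c : (1 : R) ∈ Ideal.span (Set.range c) := by rw [hcspan]; trivial
  obtain ⟨d, hd⟩ := (Submodule.mem_span_range_iff_exists_fun R).mp h1c
  -- the matrices
  set u : Matrix (Fin n) (Fin n) R :=
    fun i j => if h : (i : ℕ) < k ∧ k ≤ (j : ℕ) then b ⟨i, h.1⟩ * r j else 0 with hu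
  set x : Matrix (Fin n) (Fin n) R := 1 + u with hx
  set w : Fin n → R := fun i => (x * G) i z0 with hw
  have hwval : ∀ i : Fin n, w i = if h : (i : ℕ) < k then c ⟨i, h⟩ else a i := by
    intro i
    have he : w i = a i + ∑ j, u i j * a j := by
      have hxg : x * G = G + u * G := by rw [hx, Matrix.add_mul, Matrix.one_mul]
      show (x * G) i z0 = _
      rw [hxg, Matrix.add_apply, Matrix.mul_apply]
    rw [he]
    by_cases hik : (i : ℕ) < k
    · rw [dif_pos hik]
      have hsum : ∑ j, u i j * a j = s * b ⟨i, hik⟩ := by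
        rw [hs, Finset.sum_mul]
        apply Finset.sum_congr rfl
        intro j _
        by_cases hj : k ≤ (j : ℕ)
        · simp only [hu]
          rw [dif_pos ⟨hik, hj⟩, if_pos hj]
          ring
        · simp only [hu]
          rw [dif_neg (by tauto), if_neg hj]
          ring
      rw [hsum]
    · rw [dif_neg hik]
      have hsum : ∑ j, u i j * a j = 0 := by
        apply Finset.sum_eq_zero
        intro j _
        simp only [hu]
        rw [dif_neg (by tauto)]
        ring
      rw [hsum, add_zero]
  have hwI : ∀ i : Fin n, k ≤ (i : ℕ) → w i ∈ I := by
    intro i hi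
    rw [hwval i, dif_neg (by omega)]
    exact haI' i hi
  set D : Fin n → R := fun j => if h : (j : ℕ) < k then d ⟨j, h⟩ else 0 with hD
  set v : Matrix (Fin n) (Fin n) R :=
    fun i j => if ((j : ℕ) < k ∧ k ≤ (i : ℕ)) then -(D j * w i) else 0 with hv
  set y : Matrix (Fin n) (Fin n) R := 1 + v with hy
  refine ⟨x, y, ?_, ?_, ?_, ?_, ?_, ?_, ?_⟩
  · intro i
    have hni : ¬ ((i : ℕ) < k ∧ k ≤ (i : ℕ)) := by omega
    rw [hx, Matrix.add_apply]
    simp [hx, hu, Matrix.add_apply, Matrix.one_apply, hni]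
  · intro i j hji
    have hji' : (j : ℕ) < (i : ℕ) := hji
    have hne : i ≠ j := by intro h; subst h; exact lt_irrefl _ hji
    have hni : ¬ ((i : ℕ) < k ∧ k ≤ (j : ℕ)) := by omega
    rw [hx, Matrix.add_apply]
    simp [hx, hu, Matrix.add_apply, Matrix.one_apply_ne hne, hni]
  · intro i j hij
    have hne : i ≠ j := by intro h; subst h; exact lt_irrefl _ hij
    have he : x i j = u i j := by
      simp [hx, Matrix.add_apply, Matrix.one_apply_ne hne]
    rw [he, hu]
    dsimp only
    split
    · exact Ideal.mul_mem_right _ _ (hbI _)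
    · exact I.zero_mem
  · intro i
    have hni : ¬ ((i : ℕ) < k ∧ k ≤ (i : ℕ)) := by omega
    rw [hy, Matrix.add_apply]
    simp [hy, hv, Matrix.add_apply, Matrix.one_apply, hni]
  · intro i j hij
    have hij' : (i : ℕ) < (j : ℕ) := hij
    have hne : i ≠ j := by intro h; subst h; exact lt_irrefl _ hij
    have hni : ¬ ((j : ℕ) < k ∧ k ≤ (i : ℕ)) := by omega
    rw [hy, Matrix.add_apply]
    simp [hy, hv, Matrix.add_apply, Matrix.one_apply_ne hne, hni]
  · intro i j hji
    have hne : i ≠ j := by intro h; subst h; exact lt_irrefl _ hji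
    have he : y i j = v i j := by
      simp [hy, Matrix.add_apply, Matrix.one_apply_ne hne]
    rw [he, hv]
    dsimp only
    split
    · rename_i hcond
      exact neg_mem (Ideal.mul_mem_left _ _ (hwI i hcond.2))
    · exact I.zero_mem
  · intro j hj
    have hassoc : y * x * G = y * (x * G) := by rw [Matrix.mul_assoc]
    rw [hassoc]
    show (y * (x * G)) j z0 = 0
    have he : (y * (x * G)) j z0 = w j + ∑ m, v j m * w m := by
      have hyg : y * (x * G) = (x * G) + v * (x * G) := by
        rw [hy, Matrix.add_mul, Matrix.one_mul]
      rw [hyg, Matrix.add_apply]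
      show w j + (v * (x * G)) j z0 = _
      rw [Matrix.mul_apply]
    rw [he]
    have hsum : ∑ m, v j m * w m = -(w j * ∑ m : Fin k, d m * c m) := by
      have h1 : ∀ m : Fin n, v j m * w m =
          if (m : ℕ) < k then -(D m * w j) * w m else 0 := by
        intro m
        by_cases hm : (m : ℕ) < k
        · simp only [hv, if_pos hm, if_pos (⟨hm, hj⟩ : (m : ℕ) < k ∧ k ≤ (j : ℕ))]
        · simp only [hv, if_neg hm, if_neg (by tauto : ¬ ((m : ℕ) < k ∧ k ≤ (j : ℕ)))]
          ring
      calc ∑ m, v j m * w m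
          = ∑ m : Fin n, if (m : ℕ) < k then -(D m * w j) * w m else 0 :=
            Finset.sum_congr rfl (fun m _ => h1 m)
        _ = ∑ m : Fin k, -(D (Fin.castLE hkn m) * w j) * w (Fin.castLE hkn m) :=
            sum_fin_lt hkn _
        _ = ∑ m : Fin k, -(w j * (d m * c m)) := by
            apply Finset.sum_congr rfl
            intro m _
            have hm : ((Fin.castLE hkn m : Fin n) : ℕ) < k := m.isLt
            have hmk : (⟨((Fin.castLE hkn m : Fin n) : ℕ), hm⟩ : Fin k) = m :=
              Fin.ext (by simp)
            have hDm : D (Fin.castLE hkn m) = d m := by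
              simp only [hD]
              rw [dif_pos hm, hmk]
            have hwm : w (Fin.castLE hkn m) = c m := by
              rw [hwval, dif_pos hm, hmk]
            rw [hDm, hwm]
            ring
        _ = -(w j * ∑ m : Fin k, d m * c m) := by
            rw [Finset.mul_sum, ← Finset.sum_neg_distrib]
    rw [hsum]
    have hd1 : ∑ m : Fin k, d m * c m = 1 := by
      simpa [smul_eq_mul] using hd
    rw [hd1, mul_one, add_neg_cancel]
end
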